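/- arXiv:1906.11392 — 4 statements merged into one kernel-verified Lean document; each statement's English description precedes it below -/
import Mathlib

section
/- Let P and Q be probability measures on a measurable space (Ω, F) with P absolutely continuous with respect to Q, and let Z : Ω → [0,1] be any F-measurable random variable. Then KL(P ‖ Q) ≥ kl(E_P[Z], E_Q[Z]), where kl(a,b) := a·log(a/b) + (1−a)·log((1−a)/(1−b)) is the Kullback–Leibler divergence between Bernoulli distributions of means a and b. In particular, for any event E ∈ F, KL(P ‖ Q) ≥ kl(P(E), Q(E)). -/
/-!
STATEMENT 5 (data-processing / change-of-measure inequality):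
For probability measures `P ≪ Q` and any measurable `Z : Ω → [0,1]`,
`KL(P‖Q) ≥ kl(E_P[Z], E_Q[Z])`, and in particular `KL(P‖Q) ≥ kl(P(E), Q(E))`
for every measurable event `E`.
-/

open MeasureTheory
open scoped ENNReal Classical

/-- Kullback–Leibler divergence `∫ log(dP/dQ) dP`, valued in `[0,∞]`:
it is `∞` unless `P ≪ Q` and the log-likelihood ratio is `P`-integrable. -/
noncomputable def klDivergence {Ω : Type*} [MeasurableSpace Ω] (P Q : Measure Ω) : ℝ≥0∞ :=
  if P ≪ Q ∧ Integrable (fun ω => Real.log (P.rnDeriv Q ω).toReal) P then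
    ENNReal.ofReal (∫ ω, Real.log (P.rnDeriv Q ω).toReal ∂P)
  else ∞

/-- Binary (Bernoulli) Kullback–Leibler divergence `kl(a,b)`, valued in `[0,∞]`,
with the conventions `0·log 0 = 0`, and `kl(a,b) = ∞` if `b = 0 < a` or `b = 1 > a`. -/
noncomputable def klBernoulli (a b : ℝ) : ℝ≥0∞ :=
  if (b = 0 ∧ 0 < a) ∨ (b = 1 ∧ a < 1) then ∞
  else ENNReal.ofReal (a * Real.log (a / b) + (1 - a) * Real.log ((1 - a) / (1 - b)))

private lemma enn_aux (r : ℝ≥0∞) {x : ℝ} (hx : 0 ≤ x) :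
    r * ENNReal.ofReal (x * (r.toReal)⁻¹) ≤ ENNReal.ofReal x := by
  rcases eq_or_ne r 0 with h | h0
  · simp [h]
  rcases eq_or_ne r ∞ with h | htop
  · simp [h]
  · have hr : 0 < r.toReal := ENNReal.toReal_pos h0 htop
    rw [ENNReal.ofReal_mul hx, ENNReal.ofReal_inv_of_pos hr, ENNReal.ofReal_toReal htop,
      mul_comm (ENNReal.ofReal x) r⁻¹, ← mul_assoc, ENNReal.mul_inv_cancel h0 htop, one_mul]

private lemma kl_le_klDiv {Ω : Type*} [MeasurableSpace Ω] (P Q : Measure Ω)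
    [IsProbabilityMeasure P] [IsProbabilityMeasure Q] (hPQ : P ≪ Q)
    (Z : Ω → ℝ) (hZmeas : Measurable Z) (hZ01 : ∀ ω, Z ω ∈ Set.Icc (0 : ℝ) 1) :
    klBernoulli (∫ ω, Z ω ∂P) (∫ ω, Z ω ∂Q) ≤ klDivergence P Q := by
  rw [klDivergence]
  split_ifs with h
  swap
  · exact le_top
  obtain ⟨-, hint⟩ := h
  have hZnormle : ∀ ω, ‖Z ω‖ ≤ 1 := by
    intro ω
    rw [Real.norm_eq_abs, abs_le]
    exact ⟨by linarith [(hZ01 ω).1], (hZ01 ω).2⟩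
  have hZintP : Integrable Z P :=
    (integrable_const 1).mono' hZmeas.aestronglyMeasurable (Filter.Eventually.of_forall hZnormle)
  have hZintQ : Integrable Z Q :=
    (integrable_const 1).mono' hZmeas.aestronglyMeasurable (Filter.Eventually.of_forall hZnormle)
  set a : ℝ := ∫ ω, Z ω ∂P with ha_def
  set b : ℝ := ∫ ω, Z ω ∂Q with hb_def
  set K : ℝ := ∫ ω, Real.log (P.rnDeriv Q ω).toReal ∂P with hK_def
  have ha0 : 0 ≤ a := integral_nonneg fun ω => (hZ01 ω).1
  have hb0 : 0 ≤ b := integral_nonneg fun ω => (hZ01 ω).1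
  have ha1 : a ≤ 1 := by
    have := integral_mono hZintP (integrable_const 1) fun ω => (hZ01 ω).2
    simpa using this
  have hb1 : b ≤ 1 := by
    have := integral_mono hZintQ (integrable_const 1) fun ω => (hZ01 ω).2
    simpa using this
  -- expectation of an affine function of Z
  have hexp : ∀ (μ : Measure Ω) [IsProbabilityMeasure μ], Integrable Z μ → ∀ c d : ℝ,
      ∫ ω, (Z ω * c + (1 - Z ω) * d) ∂μ = (∫ ω, Z ω ∂μ) * c + (1 - ∫ ω, Z ω ∂μ) * d := by
    intro μ _ hZint c d
    have h1Z : Integrable (fun ω => 1 - Z ω) μ := (integrable_const 1).sub hZint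
    rw [integral_add (hZint.mul_const c) (h1Z.mul_const d),
      integral_mul_const, integral_mul_const,
      integral_sub (integrable_const 1) hZint]
    simp
  -- the master inequality
  have hmaster : ∀ c d : ℝ,
      a * c + (1 - a) * d ≤ K + (b * Real.exp c + (1 - b) * Real.exp d - 1) := by
    intro c d
    set g : Ω → ℝ := fun ω => Z ω * c + (1 - Z ω) * d with hg_def
    have hgmeas : Measurable g := by
      apply Measurable.add
      · exact hZmeas.mul_const c
      · exact ((measurable_const.sub hZmeas).mul_const d)
    have hgbound : ∀ ω, ‖g ω‖ ≤ |c| + |d| := by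
      intro ω
      have h1 := (hZ01 ω).1
      have h2 := (hZ01 ω).2
      rw [Real.norm_eq_abs]
      have habs := abs_add_le (Z ω * c) ((1 - Z ω) * d)
      rw [abs_mul, abs_mul, abs_of_nonneg h1,
        abs_of_nonneg (show (0:ℝ) ≤ 1 - Z ω by linarith)] at habs
      nlinarith [abs_nonneg c, abs_nonneg d, abs_le_abs (le_refl c), le_abs_self c,
        le_abs_self d, abs_nonneg (Z ω * c + (1 - Z ω) * d)]
    have hgintP : Integrable g P :=
      (integrable_const (|c| + |d|)).mono' hgmeas.aestronglyMeasurable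
        (Filter.Eventually.of_forall hgbound)
    have hgP : ∫ ω, g ω ∂P = a * c + (1 - a) * d := hexp P hZintP c d
    -- convexity of exp
    have hconv : ∀ ω, Real.exp (g ω) ≤ Z ω * Real.exp c + (1 - Z ω) * Real.exp d := by
      intro ω
      have := convexOn_exp.2 (Set.mem_univ c) (Set.mem_univ d) (hZ01 ω).1
        (show (0:ℝ) ≤ 1 - Z ω by linarith [(hZ01 ω).2]) (by ring)
      simpa [smul_eq_mul] using this
    have hexpgbd : ∀ ω, ‖Real.exp (g ω)‖ ≤ Real.exp (|c| + |d|) := by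
      intro ω
      rw [Real.norm_eq_abs, abs_of_pos (Real.exp_pos _)]
      exact Real.exp_le_exp.2 ((le_abs_self _).trans (hgbound ω))
    have hexpgintQ : Integrable (fun ω => Real.exp (g ω)) Q :=
      (integrable_const _).mono' (Real.measurable_exp.comp hgmeas).aestronglyMeasurable
        (Filter.Eventually.of_forall hexpgbd)
    have hQbound : ∫ ω, Real.exp (g ω) ∂Q ≤ b * Real.exp c + (1 - b) * Real.exp d := by
      calc ∫ ω, Real.exp (g ω) ∂Q
          ≤ ∫ ω, (Z ω * Real.exp c + (1 - Z ω) * Real.exp d) ∂Q :=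
            integral_mono hexpgintQ
              ((hZintQ.mul_const _).add (((integrable_const 1).sub hZintQ).mul_const _)) hconv
        _ = b * Real.exp c + (1 - b) * Real.exp d := hexp Q hZintQ _ _
    -- the likelihood-ratio trick
    set φ : Ω → ℝ := fun ω => Real.exp (g ω) * ((P.rnDeriv Q ω).toReal)⁻¹ with hφ_def
    have hφmeas : Measurable φ :=
      (Real.measurable_exp.comp hgmeas).mul
        ((Measure.measurable_rnDeriv P Q).ennreal_toReal.inv)
    have hφnn : ∀ ω, 0 ≤ φ ω := fun ω =>
      mul_nonneg (Real.exp_pos _).le (inv_nonneg.2 ENNReal.toReal_nonneg)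
    have hlint1 : ∫⁻ ω, ENNReal.ofReal (φ ω) ∂P ≤ ∫⁻ ω, ENNReal.ofReal (Real.exp (g ω)) ∂Q := by
      rw [← lintegral_rnDeriv_mul hPQ hφmeas.ennreal_ofReal.aemeasurable]
      exact lintegral_mono fun ω => enn_aux _ (Real.exp_pos _).le
    have hlint2 : ∫⁻ ω, ENNReal.ofReal (Real.exp (g ω)) ∂Q ≤ ENNReal.ofReal (Real.exp (|c| + |d|)) := by
      calc ∫⁻ ω, ENNReal.ofReal (Real.exp (g ω)) ∂Q
          ≤ ∫⁻ _, ENNReal.ofReal (Real.exp (|c| + |d|)) ∂Q :=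
            lintegral_mono fun ω => ENNReal.ofReal_le_ofReal
              (by simpa [Real.norm_eq_abs, abs_of_pos (Real.exp_pos _)] using hexpgbd ω)
        _ = ENNReal.ofReal (Real.exp (|c| + |d|)) := by simp
    have hlintQ_ne : ∫⁻ ω, ENNReal.ofReal (Real.exp (g ω)) ∂Q ≠ ∞ :=
      (lt_of_le_of_lt hlint2 ENNReal.ofReal_lt_top).ne
    have hφint : Integrable φ P := by
      refine ⟨hφmeas.aestronglyMeasurable, ?_⟩
      rw [hasFiniteIntegral_iff_ofReal (Filter.Eventually.of_forall hφnn)]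
      exact lt_of_le_of_lt (hlint1.trans hlint2) ENNReal.ofReal_lt_top
    have hφP : ∫ ω, φ ω ∂P ≤ ∫ ω, Real.exp (g ω) ∂Q := by
      rw [integral_eq_lintegral_of_nonneg_ae (Filter.Eventually.of_forall hφnn)
          hφmeas.aestronglyMeasurable,
        integral_eq_lintegral_of_nonneg_ae
          (Filter.Eventually.of_forall fun ω => (Real.exp_pos (g ω)).le)
          (Real.measurable_exp.comp hgmeas).aestronglyMeasurable]
      exact ENNReal.toReal_mono hlintQ_ne hlint1
    have hfae : ∀ᵐ ω ∂P, 0 < (P.rnDeriv Q ω).toReal := by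
      have h1 := Measure.rnDeriv_pos hPQ
      have h2 : ∀ᵐ ω ∂P, P.rnDeriv Q ω < ∞ := hPQ.ae_le (Measure.rnDeriv_lt_top P Q)
      filter_upwards [h1, h2] with ω hp hl
      exact ENNReal.toReal_pos hp.ne' hl.ne
    have hptwise : ∀ᵐ ω ∂P, g ω - Real.log (P.rnDeriv Q ω).toReal ≤ φ ω - 1 := by
      filter_upwards [hfae] with ω hf0
      have hphi : 0 < φ ω := mul_pos (Real.exp_pos _) (inv_pos.2 hf0)
      have hlog := Real.log_le_sub_one_of_pos hphi
      rw [hφ_def] at hlog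
      rw [Real.log_mul (Real.exp_ne_zero _) (inv_ne_zero hf0.ne'), Real.log_exp,
        Real.log_inv] at hlog
      simp only [hφ_def]
      linarith
    have hkey : ∫ ω, (g ω - Real.log (P.rnDeriv Q ω).toReal) ∂P ≤ ∫ ω, (φ ω - 1) ∂P :=
      integral_mono_ae (hgintP.sub hint) (hφint.sub (integrable_const 1)) hptwise
    rw [integral_sub hgintP hint, integral_sub hφint (integrable_const 1), hgP] at hkey
    simp only [integral_const, measure_univ, smul_eq_mul, one_mul, ENNReal.toReal_one, probReal_univ] at hkey
    have : a * c + (1 - a) * d - K ≤ ∫ ω, φ ω ∂P - 1 := hkey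
    linarith [hφP, hQbound]
  -- now conclude, splitting on the value of b
  by_cases hbz : b = 0
  · -- then a = 0 and kl(0,0) = 0
    have hZQ : Z =ᵐ[Q] 0 :=
      (integral_eq_zero_iff_of_nonneg (fun ω => (hZ01 ω).1) hZintQ).1 hbz
    have haz : a = 0 := by
      have := integral_congr_ae (hPQ.ae_eq hZQ)
      simpa [← ha_def] using this
    rw [haz, hbz, klBernoulli, if_neg (by norm_num)]
    apply ENNReal.ofReal_le_ofReal
    have hKnn : 0 ≤ K := by
      have := hmaster 0 0
      simp only [mul_zero, Real.exp_zero, mul_one] at this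
      linarith
    simp [Real.log_one]
    linarith
  by_cases hbo : b = 1
  · -- then a = 1 and kl(1,1) = 0
    have hWintQ : Integrable (fun ω => 1 - Z ω) Q := (integrable_const 1).sub hZintQ
    have hWQ : (fun ω => 1 - Z ω) =ᵐ[Q] 0 := by
      apply (integral_eq_zero_iff_of_nonneg
        (f := fun ω => 1 - Z ω) (fun ω => show (0:ℝ) ≤ 1 - Z ω by linarith [(hZ01 ω).2]) hWintQ).1
      rw [integral_sub (integrable_const 1) hZintQ]
      simp [← hb_def, hbo]
    have hWP : (fun ω => 1 - Z ω) =ᵐ[P] 0 := hPQ.ae_eq hWQ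
    have hao : a = 1 := by
      have h0 : ∫ ω, (1 - Z ω) ∂P = 0 := by
        have := integral_congr_ae hWP
        simpa using this
      rw [integral_sub (integrable_const 1) hZintP] at h0
      simp only [integral_const, measure_univ, smul_eq_mul, one_mul, ENNReal.toReal_one, probReal_univ,
        ← ha_def] at h0
      linarith
    rw [hao, hbo, klBernoulli, if_neg (by norm_num)]
    apply ENNReal.ofReal_le_ofReal
    have hKnn : 0 ≤ K := by
      have := hmaster 0 0
      simp only [mul_zero, Real.exp_zero, mul_one] at this
      linarith
    simp [Real.log_one]
    linarith
  -- main case: 0 < b < 1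
  have hbpos : 0 < b := lt_of_le_of_ne hb0 (Ne.symm hbz)
  have hbpos' : 0 < 1 - b := lt_of_le_of_ne (by linarith) (by intro h; exact hbo (by linarith))
  rw [klBernoulli, if_neg (by push_neg; exact ⟨fun h => absurd h hbz, fun h => absurd h hbo⟩)]
  apply ENNReal.ofReal_le_ofReal
  by_cases haz : a = 0
  · rw [haz]
    simp only [zero_mul, zero_add, sub_zero, one_mul]
    apply le_of_forall_pos_le_add
    intro ε hε
    have := hmaster (Real.log (ε / b)) (Real.log (1 / (1 - b)))
    rw [haz, Real.exp_log (div_pos hε hbpos), Real.exp_log (div_pos one_pos hbpos')] at this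
    have e1 : b * (ε / b) = ε := by field_simp
    have e2 : (1 - b) * (1 / (1 - b)) = 1 := by field_simp
    simp only [zero_mul, zero_add, sub_zero, one_mul] at this
    rw [e1, e2] at this
    linarith
  by_cases hao : a = 1
  · rw [hao]
    simp only [sub_self, zero_mul, add_zero, one_mul]
    apply le_of_forall_pos_le_add
    intro ε hε
    have := hmaster (Real.log (1 / b)) (Real.log (ε / (1 - b)))
    rw [hao, Real.exp_log (div_pos one_pos hbpos), Real.exp_log (div_pos hε hbpos')] at this
    have e1 : b * (1 / b) = 1 := by field_simp
    have e2 : (1 - b) * (ε / (1 - b)) = ε := by field_simp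
    simp only [sub_self, zero_mul, add_zero, one_mul] at this
    rw [e1, e2] at this
    linarith
  · have hapos : 0 < a := lt_of_le_of_ne ha0 (Ne.symm haz)
    have hapos' : 0 < 1 - a := lt_of_le_of_ne (by linarith) (by intro h; exact hao (by linarith))
    have := hmaster (Real.log (a / b)) (Real.log ((1 - a) / (1 - b)))
    rw [Real.exp_log (div_pos hapos hbpos), Real.exp_log (div_pos hapos' hbpos')] at this
    have e1 : b * (a / b) = a := by field_simp
    have e2 : (1 - b) * ((1 - a) / (1 - b)) = 1 - a := by field_simp
    rw [e1, e2] at this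
    linarith

theorem kl_data_processing {Ω : Type*} [MeasurableSpace Ω] (P Q : Measure Ω)
    [IsProbabilityMeasure P] [IsProbabilityMeasure Q] (hPQ : P ≪ Q)
    (Z : Ω → ℝ) (hZmeas : Measurable Z) (hZ01 : ∀ ω, Z ω ∈ Set.Icc (0 : ℝ) 1) :
    klBernoulli (∫ ω, Z ω ∂P) (∫ ω, Z ω ∂Q) ≤ klDivergence P Q ∧
      ∀ E : Set Ω, MeasurableSet E →
        klBernoulli (P E).toReal ((Q E).toReal) ≤ klDivergence P Q := by
  refine ⟨kl_le_klDiv P Q hPQ Z hZmeas hZ01, fun E hE => ?_⟩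
  have h := kl_le_klDiv P Q hPQ (E.indicator 1) (measurable_one.indicator hE)
    (fun ω => ?_)
  · rwa [integral_indicator_one hE, integral_indicator_one hE] at h
  · by_cases hω : ω ∈ E <;> simp [Set.indicator, hω]
end

section
/- Fix α ∈ (0,1) and ε_A, ε_B > 0. Let Δ_A ∈ ℝ^{n_x×n_x} and Δ_B ∈ ℝ^{n_x×n_u} satisfy ‖Δ_A‖₂ ≤ ε_A and ‖Δ_B‖₂ ≤ ε_B. Then for any matrices X ∈ ℂ^{n_x×n_x} and Y ∈ ℂ^{n_u×n_x}, ‖Δ_A X + Δ_B Y‖₂ ≤ ‖ [ (ε_A/√α)·X ; (ε_B/√(1−α))·Y ] ‖₂, the matrix on the right being the (n_x+n_u)×n_x vertical block stacking. Consequently, for any functions Φ_x : S¹ → ℂ^{n_x×n_x} and Φ_u : S¹ → ℂ^{n_u×n_x} on the unit circle, sup_{z∈S¹} ‖Δ_A Φ_x(z) + Δ_B Φ_u(z)‖₂ ≤ sup_{z∈S¹} ‖ [ (ε_A/√α)·Φ_x(z) ; (ε_B/√(1−α))·Φ_u(z) ] ‖₂. -/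
/-!
STATEMENT 6: Proposition 3.5 of Dean et al. (robust LQR).
If `‖Δ_A‖₂ ≤ ε_A` and `‖Δ_B‖₂ ≤ ε_B`, then for any `α ∈ (0,1)` and matrices `X, Y`,
`‖Δ_A X + Δ_B Y‖₂ ≤ ‖[ (ε_A/√α) X ; (ε_B/√(1-α)) Y ]‖₂`; consequently the corresponding
frequency-wise supremum bound over the unit circle holds (H∞-norm bound).
-/

open scoped ENNReal

/-- Spectral (ℓ²→ℓ² operator) norm of a real matrix. -/
noncomputable def specNormR {m n : Type*} [Fintype m] [Fintype n] [DecidableEq n]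
    (M : Matrix m n ℝ) : ℝ :=
  ‖LinearMap.toContinuousLinearMap (Matrix.toEuclideanLin M)‖

/-- Spectral (ℓ²→ℓ² operator) norm of a complex matrix. -/
noncomputable def specNormC {m n : Type*} [Fintype m] [Fintype n] [DecidableEq n]
    (M : Matrix m n ℂ) : ℝ :=
  ‖LinearMap.toContinuousLinearMap (Matrix.toEuclideanLin M)‖

lemma specR_le {m n : Type*} [Fintype m] [Fintype n] [DecidableEq n]
    (M : Matrix m n ℝ) (v : EuclideanSpace ℝ n) :
    ‖Matrix.toEuclideanLin M v‖ ≤ specNormR M * ‖v‖ := by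
  have := (LinearMap.toContinuousLinearMap (Matrix.toEuclideanLin M)).le_opNorm v
  simpa [specNormR] using this

lemma specC_le {m n : Type*} [Fintype m] [Fintype n] [DecidableEq n]
    (M : Matrix m n ℂ) (v : EuclideanSpace ℂ n) :
    ‖Matrix.toEuclideanLin M v‖ ≤ specNormC M * ‖v‖ := by
  have := (LinearMap.toContinuousLinearMap (Matrix.toEuclideanLin M)).le_opNorm v
  simpa [specNormC] using this

lemma norm_sq_eu {𝕜 : Type*} [RCLike 𝕜] {n : Type*} [Fintype n] (v : EuclideanSpace 𝕜 n) :
    ‖v‖ ^ 2 = ∑ i, ‖v i‖ ^ 2 := by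
  rw [EuclideanSpace.norm_eq, Real.sq_sqrt (by positivity)]

/-- complexification norm bound -/
lemma mapC_le {m n : Type*} [Fintype m] [Fintype n] [DecidableEq n]
    (M : Matrix m n ℝ) {ε : ℝ} (hM : specNormR M ≤ ε)
    (v : EuclideanSpace ℂ n) :
    ‖Matrix.toEuclideanLin (M.map Complex.ofReal) v‖ ≤ ε * ‖v‖ := by
  have hε : 0 ≤ ε := le_trans (norm_nonneg _) hM
  have hsq : ‖Matrix.toEuclideanLin (M.map Complex.ofReal) v‖ ^ 2 ≤ (ε * ‖v‖) ^ 2 := by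
    set x : EuclideanSpace ℝ n := (WithLp.equiv 2 _).symm (fun i => (v i).re) with hx
    set y : EuclideanSpace ℝ n := (WithLp.equiv 2 _).symm (fun i => (v i).im) with hy
    have hre : ∀ j, (Matrix.toEuclideanLin (M.map Complex.ofReal) v j).re
        = Matrix.toEuclideanLin M x j := by
      intro j
      simp [Matrix.toEuclideanLin_apply, Matrix.mulVec, dotProduct, hx,
        Complex.ofReal_mul]
    have him : ∀ j, (Matrix.toEuclideanLin (M.map Complex.ofReal) v j).im
        = Matrix.toEuclideanLin M y j := by
      intro j
      simp [Matrix.toEuclideanLin_apply, Matrix.mulVec, dotProduct, hy]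
    have h1 : ‖Matrix.toEuclideanLin (M.map Complex.ofReal) v‖ ^ 2
        = ‖Matrix.toEuclideanLin M x‖ ^ 2 + ‖Matrix.toEuclideanLin M y‖ ^ 2 := by
      rw [norm_sq_eu, norm_sq_eu, norm_sq_eu, ← Finset.sum_add_distrib]
      refine Finset.sum_congr rfl fun j _ => ?_
      rw [← hre j, ← him j]
      rw [Complex.sq_norm, Complex.normSq_apply]
      simp only [Real.norm_eq_abs, sq_abs]
      ring
    have h2 : ‖v‖ ^ 2 = ‖x‖ ^ 2 + ‖y‖ ^ 2 := by
      rw [norm_sq_eu, norm_sq_eu, norm_sq_eu, ← Finset.sum_add_distrib]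
      refine Finset.sum_congr rfl fun j _ => ?_
      rw [Complex.sq_norm, Complex.normSq_apply]
      simp only [hx, hy, Real.norm_eq_abs, sq_abs, WithLp.equiv_symm_apply, WithLp.ofLp_toLp]
      ring
    have bx := specR_le M x
    have by' := specR_le M y
    have hs : 0 ≤ specNormR M := norm_nonneg _
    have hxx : ‖Matrix.toEuclideanLin M x‖ ^ 2 ≤ (ε * ‖x‖) ^ 2 := by
      have : ‖Matrix.toEuclideanLin M x‖ ≤ ε * ‖x‖ :=
        bx.trans (by nlinarith [norm_nonneg x])
      nlinarith [norm_nonneg (Matrix.toEuclideanLin M x)]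
    have hyy : ‖Matrix.toEuclideanLin M y‖ ^ 2 ≤ (ε * ‖y‖) ^ 2 := by
      have : ‖Matrix.toEuclideanLin M y‖ ≤ ε * ‖y‖ :=
        by'.trans (by nlinarith [norm_nonneg y])
      nlinarith [norm_nonneg (Matrix.toEuclideanLin M y)]
    rw [h1, mul_pow, h2]; nlinarith
  have h0 : 0 ≤ ε * ‖v‖ := by positivity
  nlinarith [norm_nonneg (Matrix.toEuclideanLin (M.map Complex.ofReal) v)]

lemma toEL_mul {l m n : Type*} [Fintype l] [Fintype m] [Fintype n] [DecidableEq m] [DecidableEq n]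
    (A : Matrix l m ℂ) (B : Matrix m n ℂ) (v : EuclideanSpace ℂ n) :
    Matrix.toEuclideanLin (A * B) v = Matrix.toEuclideanLin A (Matrix.toEuclideanLin B v) := by
  simp [Matrix.toEuclideanLin_apply, Matrix.mulVec_mulVec]

theorem robust_lqr_hinf_bound (nx nu : ℕ) (α εA εB : ℝ)
    (hα : α ∈ Set.Ioo (0 : ℝ) 1) (hεA : 0 < εA) (hεB : 0 < εB)
    (ΔA : Matrix (Fin nx) (Fin nx) ℝ) (ΔB : Matrix (Fin nx) (Fin nu) ℝ)
    (hΔA : specNormR ΔA ≤ εA) (hΔB : specNormR ΔB ≤ εB) :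
    (∀ (X : Matrix (Fin nx) (Fin nx) ℂ) (Y : Matrix (Fin nu) (Fin nx) ℂ),
      specNormC (ΔA.map Complex.ofReal * X + ΔB.map Complex.ofReal * Y) ≤
        specNormC (Matrix.fromRows
          ((((εA / Real.sqrt α : ℝ) : ℂ)) • X)
          ((((εB / Real.sqrt (1 - α) : ℝ) : ℂ)) • Y))) ∧
    (∀ (Φx : Circle → Matrix (Fin nx) (Fin nx) ℂ) (Φu : Circle → Matrix (Fin nu) (Fin nx) ℂ),
      (⨆ z : Circle, ENNReal.ofReal (specNormC
          (ΔA.map Complex.ofReal * Φx z + ΔB.map Complex.ofReal * Φu z))) ≤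
        ⨆ z : Circle, ENNReal.ofReal (specNormC (Matrix.fromRows
          ((((εA / Real.sqrt α : ℝ) : ℂ)) • Φx z)
          ((((εB / Real.sqrt (1 - α) : ℝ) : ℂ)) • Φu z)))) := by
  obtain ⟨hα0, hα1⟩ := hα
  have hβ0 : (0:ℝ) < 1 - α := by linarith
  set c : ℝ := εA / Real.sqrt α with hc
  set d : ℝ := εB / Real.sqrt (1 - α) with hd
  have hsa : Real.sqrt α > 0 := Real.sqrt_pos.mpr hα0
  have hsb : Real.sqrt (1 - α) > 0 := Real.sqrt_pos.mpr hβ0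
  have hca : Real.sqrt α * c = εA := by rw [hc]; field_simp
  have hdb : Real.sqrt (1 - α) * d = εB := by rw [hd]; field_simp
  have hc0 : 0 ≤ c := le_of_lt (div_pos hεA hsa)
  have hd0 : 0 ≤ d := le_of_lt (div_pos hεB hsb)
  have key : ∀ (X : Matrix (Fin nx) (Fin nx) ℂ) (Y : Matrix (Fin nu) (Fin nx) ℂ),
      specNormC (ΔA.map Complex.ofReal * X + ΔB.map Complex.ofReal * Y) ≤
        specNormC (Matrix.fromRows (((c : ℝ) : ℂ) • X) (((d : ℝ) : ℂ) • Y)) := by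
    intro X Y
    set F := Matrix.fromRows (((c : ℝ) : ℂ) • X) (((d : ℝ) : ℂ) • Y) with hF
    refine ContinuousLinearMap.opNorm_le_bound _ (norm_nonneg _) fun v => ?_
    rw [LinearMap.coe_toContinuousLinearMap']
    set p := Matrix.toEuclideanLin X v with hp
    set q := Matrix.toEuclideanLin Y v with hq
    have hsplit : Matrix.toEuclideanLin (ΔA.map Complex.ofReal * X + ΔB.map Complex.ofReal * Y) v
        = Matrix.toEuclideanLin (ΔA.map Complex.ofReal) p
          + Matrix.toEuclideanLin (ΔB.map Complex.ofReal) q := by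
      rw [map_add, LinearMap.add_apply, hp, hq, toEL_mul, toEL_mul]
    have hub : ‖Matrix.toEuclideanLin (ΔA.map Complex.ofReal * X + ΔB.map Complex.ofReal * Y) v‖
        ≤ εA * ‖p‖ + εB * ‖q‖ := by
      rw [hsplit]
      exact (norm_add_le _ _).trans (add_le_add (mapC_le ΔA hΔA p) (mapC_le ΔB hΔB q))
    have hFsq : ‖Matrix.toEuclideanLin F v‖ ^ 2 = (c * ‖p‖) ^ 2 + (d * ‖q‖) ^ 2 := by
      rw [norm_sq_eu, Fintype.sum_sum_type]
      have hl : ∀ j, Matrix.toEuclideanLin F v (Sum.inl j) = ((c : ℝ) : ℂ) * p j := by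
        intro j
        simp [hF, Matrix.toEuclideanLin_apply, Matrix.fromRows_mulVec,
          Matrix.smul_mulVec, hp]
      have hr : ∀ j, Matrix.toEuclideanLin F v (Sum.inr j) = ((d : ℝ) : ℂ) * q j := by
        intro j
        simp [hF, Matrix.toEuclideanLin_apply, Matrix.fromRows_mulVec,
          Matrix.smul_mulVec, hq]
      have e1 : ∑ j, ‖Matrix.toEuclideanLin F v (Sum.inl j)‖ ^ 2 = (c * ‖p‖) ^ 2 := by
        rw [mul_pow, norm_sq_eu, Finset.mul_sum]
        refine Finset.sum_congr rfl fun j _ => ?_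
        rw [hl j, norm_mul, Complex.norm_real, Real.norm_eq_abs, abs_of_nonneg hc0]
        ring
      have e2 : ∑ j, ‖Matrix.toEuclideanLin F v (Sum.inr j)‖ ^ 2 = (d * ‖q‖) ^ 2 := by
        rw [mul_pow, norm_sq_eu, Finset.mul_sum]
        refine Finset.sum_congr rfl fun j _ => ?_
        rw [hr j, norm_mul, Complex.norm_real, Real.norm_eq_abs, abs_of_nonneg hd0]
        ring
      rw [e1, e2]
    have hmid : εA * ‖p‖ + εB * ‖q‖ ≤ ‖Matrix.toEuclideanLin F v‖ := by
      have h1 : (εA * ‖p‖ + εB * ‖q‖) ^ 2 ≤ ‖Matrix.toEuclideanLin F v‖ ^ 2 := by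
        rw [hFsq, ← hca, ← hdb]
        have ha2 : Real.sqrt α ^ 2 = α := Real.sq_sqrt hα0.le
        have hb2 : Real.sqrt (1 - α) ^ 2 = 1 - α := Real.sq_sqrt hβ0.le
        nlinarith [sq_nonneg (Real.sqrt (1 - α) * (c * ‖p‖) - Real.sqrt α * (d * ‖q‖)),
          norm_nonneg p, norm_nonneg q]
      have h0 : 0 ≤ εA * ‖p‖ + εB * ‖q‖ := by positivity
      calc εA * ‖p‖ + εB * ‖q‖ = Real.sqrt ((εA * ‖p‖ + εB * ‖q‖) ^ 2) :=
            (Real.sqrt_sq h0).symm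
        _ ≤ Real.sqrt (‖Matrix.toEuclideanLin F v‖ ^ 2) := Real.sqrt_le_sqrt h1
        _ = ‖Matrix.toEuclideanLin F v‖ := Real.sqrt_sq (norm_nonneg _)
    exact hub.trans (hmid.trans (specC_le F v))
  exact ⟨key, fun Φx Φu => iSup_mono fun z => ENNReal.ofReal_le_ofReal (key (Φx z) (Φu z))⟩
end

section
/- Let σ > 0, let π : ℝ^p → ℝ^d be continuously differentiable, and let f : ℝ^d → ℝ be bounded and measurable. Define g(θ) := E_{η∼N(0,σ²I_d)}[ f(π(θ) + η) ]. Then g is differentiable on ℝ^p and its gradient admits the score-function (likelihood-ratio) representation ∇g(θ) = (1/σ²) · (Dπ(θ))ᵀ · E_{η∼N(0,σ²I_d)}[ f(π(θ) + η) · η ], where Dπ(θ) ∈ ℝ^{d×p} is the Jacobian of π at θ. -/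
/-!
STATEMENT 8 (score-function / REINFORCE gradient identity):
For `g(θ) = E_{η ∼ N(0,σ²I_d)}[f(π(θ)+η)]` with `π` continuously differentiable and
`f` bounded measurable, `g` is differentiable and
`∇g(θ) = (1/σ²)·(Dπ(θ))ᵀ·E[f(π(θ)+η)·η]`, stated here via directional derivatives.
-/

open MeasureTheory ProbabilityTheory
open scoped ENNReal NNReal

/-- The centered Gaussian measure `N(0, σ² I_d)` on `ℝ^d` (i.i.d. coordinates). -/
noncomputable def gaussPi (d : ℕ) (σ : ℝ) : Measure (Fin d → ℝ) :=
  Measure.pi fun _ => gaussianReal 0 (Real.toNNReal (σ ^ 2))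

/-! ### Auxiliary definitions and lemmas -/

/-- The continuous linear functional `w ↦ ∑ i, z i * w i` on `ℝ^d`. -/
noncomputable def SZ (d : ℕ) (z : Fin d → ℝ) : (Fin d → ℝ) →L[ℝ] ℝ :=
  ∑ i, z i • ContinuousLinearMap.proj (R := ℝ) (φ := fun _ : Fin d => ℝ) i

lemma SZ_apply (d : ℕ) (z w : Fin d → ℝ) : SZ d z w = ∑ i, z i * w i := by
  simp [SZ, ContinuousLinearMap.sum_apply]

lemma SZ_norm (d : ℕ) (z : Fin d → ℝ) : ‖SZ d z‖ ≤ ∑ i, |z i| := by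
  refine ContinuousLinearMap.opNorm_le_bound _ (Finset.sum_nonneg fun i _ => abs_nonneg _) ?_
  intro w
  rw [SZ_apply, Finset.sum_mul]
  refine (Finset.abs_sum_le_sum_abs _ _).trans (Finset.sum_le_sum fun i _ => ?_)
  rw [abs_mul]
  refine mul_le_mul_of_nonneg_left ?_ (abs_nonneg _)
  simpa [Real.norm_eq_abs] using norm_le_pi_norm w i

/-- The density of the centered Gaussian `N(0, V·I_d)` w.r.t. Lebesgue measure. -/
noncomputable def gaussD (d : ℕ) (V : ℝ) (z : Fin d → ℝ) : ℝ :=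
  ((Real.sqrt (2 * Real.pi * V))⁻¹) ^ d * Real.exp (-(∑ i, z i ^ 2) / (2 * V))

lemma gaussD_nonneg (d : ℕ) (V : ℝ) (z : Fin d → ℝ) : 0 ≤ gaussD d V z := by
  unfold gaussD; positivity

lemma hasFDerivAt_gaussD {d : ℕ} {V : ℝ} (hV : 0 < V) (u x : Fin d → ℝ) :
    HasFDerivAt (fun x => gaussD d V (u - x))
      ((V⁻¹ * gaussD d V (u - x)) • SZ d (u - x)) x := by
  set P : Fin d → (Fin d → ℝ) →L[ℝ] ℝ :=
    fun i => ContinuousLinearMap.proj (R := ℝ) (φ := fun _ : Fin d => ℝ) i with hP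
  have hsum : HasFDerivAt (fun x : Fin d → ℝ => ∑ i, (u i - x i) ^ 2)
      (∑ i, ((u i - x i) • (0 - P i) + (u i - x i) • (0 - P i))) x := by
    refine HasFDerivAt.fun_sum fun i _ => ?_
    have h1 : HasFDerivAt (fun x : Fin d → ℝ => u i - x i) (0 - P i) x :=
      (hasFDerivAt_const (u i) x).sub ((P i).hasFDerivAt)
    rw [show (fun x : Fin d → ℝ => (u i - x i) ^ 2) = (fun x => u i - x i) * (fun x => u i - x i) from by
      funext y; simp [pow_two]]
    exact h1.mul h1
  have hE : HasFDerivAt (fun x : Fin d → ℝ => -(∑ i, (u i - x i) ^ 2) / (2 * V))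
      ((-(2 * V)⁻¹) • (∑ i, ((u i - x i) • (0 - P i) + (u i - x i) • (0 - P i)))) x := by
    have h : (fun x : Fin d → ℝ => -(∑ i, (u i - x i) ^ 2) / (2 * V))
        = fun x => (-(2 * V)⁻¹) * ∑ i, (u i - x i) ^ 2 := by
      funext y; ring
    rw [h]
    exact hsum.const_mul _
  have hfin := (hE.exp).const_mul (((Real.sqrt (2 * Real.pi * V))⁻¹) ^ d)
  have heq : (fun x => gaussD d V (u - x))
      = fun x => ((Real.sqrt (2 * Real.pi * V))⁻¹) ^ d *
          Real.exp (-(∑ i, (u i - x i) ^ 2) / (2 * V)) := by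
    funext y; simp [gaussD]
  rw [heq]
  refine hfin.congr_fderiv ?_
  ext w
  have hV' : V ≠ 0 := ne_of_gt hV
  simp only [ContinuousLinearMap.smul_apply, SZ_apply, ContinuousLinearMap.sum_apply,
    ContinuousLinearMap.add_apply, ContinuousLinearMap.sub_apply, ContinuousLinearMap.zero_apply,
    ContinuousLinearMap.proj_apply, smul_eq_mul, gaussD, Pi.sub_apply, hP]
  simp only [Finset.mul_sum]
  refine Finset.sum_congr rfl fun i _ => ?_
  field_simp
  ring

lemma lintegral_pi_prod : ∀ {n : ℕ} (g : Fin n → ℝ → ℝ≥0∞), (∀ i, Measurable (g i)) →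
    ∫⁻ x : Fin n → ℝ, ∏ i, g i (x i) = ∏ i, ∫⁻ t, g i t := by
  intro n
  induction n with
  | zero => intro g hg; simp [volume_pi]
  | succ n ih =>
    intro g hg
    rw [volume_pi, ← ((measurePreserving_piFinSuccAbove
      (fun _ : Fin (n+1) => (volume : Measure ℝ)) 0).symm).lintegral_comp_emb
      (MeasurableEquiv.measurableEmbedding _)]
    simp_rw [MeasurableEquiv.piFinSuccAbove_symm_apply, Fin.insertNthEquiv,
      Fin.prod_univ_succ, Fin.insertNth_zero]
    simp only [Fin.zero_succAbove, cast_eq, Function.comp_def, Fin.cons_zero, Fin.cons_succ,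
      Equiv.coe_fn_mk]
    have h2 : Measurable fun y : Fin n → ℝ => ∏ x : Fin n, g x.succ (y x) :=
      Finset.measurable_prod Finset.univ fun j _ => (hg _).comp (measurable_pi_apply j)
    rw [lintegral_prod_mul (hg 0).aemeasurable h2.aemeasurable]
    rw [← volume_pi, ih (fun j => g (Fin.succ j)) (fun j => hg _)]

lemma gaussD_eq_prod {d : ℕ} {σ : ℝ} (hσ : 0 < σ) (z : Fin d → ℝ) :
    gaussD d (σ ^ 2) z = ∏ i, gaussianPDFReal 0 (Real.toNNReal (σ ^ 2)) (z i) := by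
  have hc : ((Real.toNNReal (σ ^ 2) : ℝ≥0) : ℝ) = σ ^ 2 := Real.coe_toNNReal _ (sq_nonneg σ)
  simp only [gaussianPDFReal, hc, sub_zero]
  rw [Finset.prod_mul_distrib, Finset.prod_const, Finset.card_univ, Fintype.card_fin,
    ← Real.exp_sum]
  unfold gaussD
  congr 1
  rw [← Finset.sum_div, ← Finset.sum_neg_distrib]

lemma gaussPi_eq_withDensity {d : ℕ} {σ : ℝ} (hσ : 0 < σ) :
    gaussPi d σ = (volume : Measure (Fin d → ℝ)).withDensity
      (fun x => ENNReal.ofReal (gaussD d (σ ^ 2) x)) := by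
  set vnn : ℝ≥0 := Real.toNNReal (σ ^ 2) with hvnn
  have hv : vnn ≠ 0 := by
    simp only [hvnn, ne_eq, Real.toNNReal_eq_zero, not_le]
    positivity
  refine Measure.pi_eq fun s hs => ?_
  rw [withDensity_apply _ (MeasurableSet.univ_pi hs),
    ← lintegral_indicator (MeasurableSet.univ_pi hs)]
  have hpt : ∀ x : Fin d → ℝ, (Set.univ.pi s).indicator
      (fun x => ENNReal.ofReal (gaussD d (σ ^ 2) x)) x
      = ∏ i, (s i).indicator (fun t => ENNReal.ofReal (gaussianPDFReal 0 vnn t)) (x i) := by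
    intro x
    by_cases hx : x ∈ Set.univ.pi s
    · rw [Set.indicator_of_mem hx, gaussD_eq_prod hσ,
        ENNReal.ofReal_prod_of_nonneg (fun i _ => gaussianPDFReal_nonneg 0 vnn (x i))]
      exact Finset.prod_congr rfl fun i _ =>
        (Set.indicator_of_mem (hx i (Set.mem_univ i))
          (fun t => ENNReal.ofReal (gaussianPDFReal 0 vnn t))).symm
    · rw [Set.indicator_of_notMem hx]
      rw [Set.mem_univ_pi] at hx
      push_neg at hx
      obtain ⟨i, hi⟩ := hx
      exact (Finset.prod_eq_zero (Finset.mem_univ i) (Set.indicator_of_notMem hi _)).symm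
  simp_rw [hpt]
  rw [lintegral_pi_prod _
    (fun i => ((measurable_gaussianPDFReal 0 vnn).ennreal_ofReal).indicator (hs i))]
  refine Finset.prod_congr rfl fun i _ => ?_
  rw [lintegral_indicator (hs i), gaussianReal_apply 0 hv (s i)]
  rfl

lemma integral_gaussPi {d : ℕ} {σ : ℝ} (hσ : 0 < σ) (G : (Fin d → ℝ) → ℝ) :
    ∫ η, G η ∂(gaussPi d σ) = ∫ x, gaussD d (σ ^ 2) x * G x := by
  rw [gaussPi_eq_withDensity hσ]
  have hΦm : Measurable fun x : Fin d → ℝ => Real.toNNReal (gaussD d (σ ^ 2) x) := by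
    apply Measurable.real_toNNReal
    apply Measurable.const_mul
    exact (Real.measurable_exp.comp ((Finset.measurable_sum Finset.univ fun i _ =>
      (measurable_pi_apply i).pow_const 2).neg.div_const _))
  have h : (fun x : Fin d → ℝ => ENNReal.ofReal (gaussD d (σ ^ 2) x))
      = fun x => ((Real.toNNReal (gaussD d (σ ^ 2) x) : ℝ≥0) : ℝ≥0∞) := rfl
  rw [h, integral_withDensity_eq_integral_smul hΦm]
  refine integral_congr_ae (Filter.Eventually.of_forall fun x => ?_)
  simp [NNReal.smul_def, Real.coe_toNNReal _ (gaussD_nonneg d (σ ^ 2) x)]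

lemma integrable_beta {V : ℝ} (hV : 0 < V) (a : ℝ) :
    Integrable (fun t : ℝ => Real.exp (a * |t| - t ^ 2 / (2 * V))) := by
  have hmaj : Integrable (fun t : ℝ => Real.exp (a ^ 2 * V) * Real.exp (-(4 * V)⁻¹ * t ^ 2)) :=
    (integrable_exp_neg_mul_sq (by positivity)).const_mul _
  refine hmaj.mono' ?_ (Filter.Eventually.of_forall fun t => ?_)
  · have h : Continuous fun t : ℝ => Real.exp (a * |t| - t ^ 2 / (2 * V)) := by fun_prop
    exact h.aestronglyMeasurable
  · rw [Real.norm_eq_abs, abs_of_pos (Real.exp_pos _), ← Real.exp_add]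
    refine Real.exp_le_exp.mpr ?_
    have habs : t ^ 2 = |t| ^ 2 := (sq_abs t).symm
    rw [habs]
    generalize |t| = s
    have e : (a ^ 2 * V + -(4 * V)⁻¹ * s ^ 2) - (a * s - s ^ 2 / (2 * V))
        = (2 * a * V - s) ^ 2 / (4 * V) := by
      field_simp
      ring
    nlinarith [div_nonneg (sq_nonneg (2 * a * V - s)) (by positivity : (0:ℝ) ≤ 4 * V)]

lemma integrable_prodBeta {d : ℕ} {V : ℝ} (hV : 0 < V) (a : ℝ) (x : Fin d → ℝ) :
    Integrable (fun u : Fin d → ℝ =>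
      ∏ i, Real.exp (a * |u i - x i| - (u i - x i) ^ 2 / (2 * V))) :=
  Integrable.fin_nat_prod (fun i => (integrable_beta hV a).comp_sub_right (x i))

lemma gaussD_prod_exp {d : ℕ} {V : ℝ} (z : Fin d → ℝ) :
    gaussD d V z = ((Real.sqrt (2 * Real.pi * V))⁻¹) ^ d *
      ∏ i, Real.exp (-(z i) ^ 2 / (2 * V)) := by
  unfold gaussD
  rw [← Real.exp_sum]
  congr 1
  rw [← Finset.sum_div, ← Finset.sum_neg_distrib]

lemma integrable_gaussD_shift {d : ℕ} {V : ℝ} (hV : 0 < V) (x : Fin d → ℝ) :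
    Integrable (fun u : Fin d → ℝ => gaussD d V (u - x)) := by
  have h := (Integrable.fin_nat_prod (𝕜 := ℝ)
    (f := fun (i : Fin d) (t : ℝ) => Real.exp (-(t - x i) ^ 2 / (2 * V)))
    (fun i => by
      have h0 := (integrable_beta hV 0).comp_sub_right (x i)
      simpa [neg_div] using h0)).const_mul (((Real.sqrt (2 * Real.pi * V))⁻¹) ^ d)
  refine h.congr (Filter.Eventually.of_forall fun u => ?_)
  show _ = gaussD d V (u - x)
  rw [gaussD_prod_exp]
  simp [Pi.sub_apply]

lemma master_bound {d : ℕ} {V : ℝ} (hV : 0 < V) (x₀ x u : Fin d → ℝ)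
    (hx : ∀ i, |x i - x₀ i| ≤ 1) :
    gaussD d V (u - x) * ∑ i, |u i - x i| ≤
      (Real.exp d * ((Real.sqrt (2 * Real.pi * V))⁻¹) ^ d) *
        ∏ i, Real.exp ((1 + V⁻¹) * |u i - x₀ i| - (u i - x₀ i) ^ 2 / (2 * V)) := by
  set C := ((Real.sqrt (2 * Real.pi * V))⁻¹) ^ d with hC
  have hC0 : 0 ≤ C := by positivity
  have hs1 : ∑ i, |u i - x i| ≤ ∑ i, (|u i - x₀ i| + 1) := by
    refine Finset.sum_le_sum fun i _ => ?_
    calc |u i - x i| = |(u i - x₀ i) - (x i - x₀ i)| := by ring_nf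
    _ ≤ |u i - x₀ i| + |x i - x₀ i| := abs_sub _ _
    _ ≤ |u i - x₀ i| + 1 := by linarith [hx i]
  have hs2 : ∑ i, (|u i - x₀ i| + 1) ≤ Real.exp (∑ i, (|u i - x₀ i| + 1)) := by
    have := Real.add_one_le_exp (∑ i, (|u i - x₀ i| + 1))
    linarith
  have hsum_exp : Real.exp (∑ i, (|u i - x₀ i| + 1))
      = Real.exp d * ∏ i, Real.exp (|u i - x₀ i|) := by
    rw [Finset.sum_add_distrib, Finset.sum_const, Finset.card_univ, Fintype.card_fin,
      nsmul_eq_mul, mul_one, Real.exp_add, Real.exp_sum]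
    exact mul_comm _ _
  have hg : gaussD d V (u - x) ≤
      C * ∏ i, Real.exp (V⁻¹ * |u i - x₀ i| - (u i - x₀ i) ^ 2 / (2 * V)) := by
    rw [gaussD_prod_exp]
    refine mul_le_mul_of_nonneg_left (Finset.prod_le_prod (fun i _ => (Real.exp_pos _).le)
      (fun i _ => Real.exp_le_exp.mpr ?_)) hC0
    have hzi : (u i - x i) ^ 2 ≥ (u i - x₀ i) ^ 2 - 2 * |u i - x₀ i| := by
      have h1 : -(2 * |(u i - x₀ i)| * |x i - x₀ i|) ≤ 2 * (u i - x₀ i) * (x₀ i - x i) := by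
        have h2 := neg_abs_le (2 * (u i - x₀ i) * (x₀ i - x i))
        have habs : |2 * (u i - x₀ i) * (x₀ i - x i)| = 2 * |u i - x₀ i| * |x i - x₀ i| := by
          rw [abs_mul, abs_mul]
          simp [abs_sub_comm (x₀ i) (x i)]
        linarith [h2, habs ▸ h2]
      nlinarith [h1, hx i, abs_nonneg (u i - x₀ i), sq_nonneg (x₀ i - x i),
        mul_le_mul_of_nonneg_left (hx i) (abs_nonneg (u i - x₀ i))]
    have e : (V⁻¹ * |u i - x₀ i| - (u i - x₀ i) ^ 2 / (2 * V)) - (-(u i - x i) ^ 2 / (2 * V))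
        = ((u i - x i) ^ 2 - ((u i - x₀ i) ^ 2 - 2 * |u i - x₀ i|)) / (2 * V) := by
      field_simp
      ring
    have h3 : 0 ≤ ((u i - x i) ^ 2 - ((u i - x₀ i) ^ 2 - 2 * |u i - x₀ i|)) / (2 * V) :=
      div_nonneg (by linarith) (by positivity)
    simp only [Pi.sub_apply]
    linarith [e ▸ h3]
  calc gaussD d V (u - x) * ∑ i, |u i - x i|
      ≤ (C * ∏ i, Real.exp (V⁻¹ * |u i - x₀ i| - (u i - x₀ i) ^ 2 / (2 * V))) *
        (Real.exp d * ∏ i, Real.exp (|u i - x₀ i|)) := by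
        refine mul_le_mul hg (by rw [← hsum_exp]; exact hs1.trans hs2)
          (Finset.sum_nonneg fun i _ => abs_nonneg _) ?_
        positivity
    _ = (Real.exp d * C) * ∏ i, Real.exp ((1 + V⁻¹) * |u i - x₀ i| - (u i - x₀ i) ^ 2 / (2 * V)) := by
        have hprod : ∏ i, Real.exp ((1 + V⁻¹) * |u i - x₀ i| - (u i - x₀ i) ^ 2 / (2 * V))
            = (∏ i, Real.exp (V⁻¹ * |u i - x₀ i| - (u i - x₀ i) ^ 2 / (2 * V))) *
              ∏ i, Real.exp (|u i - x₀ i|) := by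
          rw [← Finset.prod_mul_distrib]
          refine Finset.prod_congr rfl fun i _ => ?_
          rw [← Real.exp_add]
          congr 1
          ring
        rw [hprod]
        ring

theorem score_function_gradient (p d : ℕ) (σ : ℝ) (hσ : 0 < σ)
    (π : (Fin p → ℝ) → (Fin d → ℝ)) (hπ : ContDiff ℝ 1 π)
    (f : (Fin d → ℝ) → ℝ) (hfmeas : Measurable f) (hfbdd : ∃ C, ∀ y, |f y| ≤ C) :
    ∀ θ : Fin p → ℝ,
      DifferentiableAt ℝ (fun θ' => ∫ η, f (π θ' + η) ∂gaussPi d σ) θ ∧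
      ∀ v : Fin p → ℝ,
        fderiv ℝ (fun θ' => ∫ η, f (π θ' + η) ∂gaussPi d σ) θ v =
          (1 / σ ^ 2) * ∑ i, (∫ η, f (π θ + η) * η i ∂gaussPi d σ) * fderiv ℝ π θ v i := by
  intro θ
  obtain ⟨Cf, hCf⟩ := hfbdd
  have hCf0 : 0 ≤ Cf := le_trans (abs_nonneg (f 0)) (hCf 0)
  set V : ℝ := σ ^ 2 with hVdef
  have hV : 0 < V := by positivity
  set C : ℝ := ((Real.sqrt (2 * Real.pi * V))⁻¹) ^ d with hCdef
  have hC0 : 0 ≤ C := by positivity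
  set x₀ : Fin d → ℝ := π θ with hx₀
  set F : (Fin d → ℝ) → (Fin d → ℝ) → ℝ := fun x u => f u * gaussD d V (u - x) with hF
  set F' : (Fin d → ℝ) → (Fin d → ℝ) → ((Fin d → ℝ) →L[ℝ] ℝ) :=
    fun x u => (V⁻¹ * (f u * gaussD d V (u - x))) • SZ d (u - x) with hF'
  -- continuity of the density
  have hGc : Continuous (gaussD d V) := by
    unfold gaussD
    fun_prop
  -- representation of the smoothed function as a Lebesgue integral
  have repA : ∀ x : Fin d → ℝ, (∫ η, f (x + η) ∂gaussPi d σ) = ∫ u, F x u := by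
    intro x
    rw [integral_gaussPi hσ]
    rw [← integral_sub_right_eq_self (fun η => gaussD d (σ ^ 2) η * f (x + η)) x]
    refine integral_congr_ae (Filter.Eventually.of_forall fun u => ?_)
    simp only [hF, add_sub_cancel]
    ring_nf
    exact mul_comm _ _
  -- representation of the coordinate integrals
  have repB : ∀ (x : Fin d → ℝ) (i : Fin d), (∫ η, f (x + η) * η i ∂gaussPi d σ)
      = ∫ u, f u * gaussD d V (u - x) * (u i - x i) := by
    intro x i
    rw [integral_gaussPi hσ]
    rw [← integral_sub_right_eq_self (fun η => gaussD d (σ ^ 2) η * (f (x + η) * η i)) x]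
    refine integral_congr_ae (Filter.Eventually.of_forall fun u => ?_)
    simp only [add_sub_cancel, Pi.sub_apply]
    ring
  -- the master dominating function centered at y
  set B : (Fin d → ℝ) → (Fin d → ℝ) → ℝ := fun y u =>
    (Real.exp d * C) * ∏ i, Real.exp ((1 + V⁻¹) * |u i - y i| - (u i - y i) ^ 2 / (2 * V)) with hB
  have hBint : ∀ y, Integrable (fun u => (V⁻¹ * Cf) * B y u) := fun y =>
    (((integrable_prodBeta hV (1 + V⁻¹) y).const_mul (Real.exp d * C)).const_mul (V⁻¹ * Cf))
  -- norm bound on F'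
  have key : ∀ (x u : Fin d → ℝ), (∀ i, |x i - x₀ i| ≤ 1) →
      ‖F' x u‖ ≤ (V⁻¹ * Cf) * B x₀ u := by
    intro x u hx
    have h1 : ‖F' x u‖ = (V⁻¹ * (|f u| * gaussD d V (u - x))) * ‖SZ d (u - x)‖ := by
      rw [show F' x u = (V⁻¹ * (f u * gaussD d V (u - x))) • SZ d (u - x) from rfl,
        norm_smul (V⁻¹ * (f u * gaussD d V (u - x))) (SZ d (u - x)),
        Real.norm_eq_abs, abs_mul, abs_mul,
        abs_of_pos (inv_pos.mpr hV), abs_of_nonneg (gaussD_nonneg d V _)]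
    rw [h1]
    have h2 : (V⁻¹ * (|f u| * gaussD d V (u - x))) * ‖SZ d (u - x)‖
        ≤ (V⁻¹ * (Cf * gaussD d V (u - x))) * ∑ i, |u i - x i| := by
      have hsz : ‖SZ d (u - x)‖ ≤ ∑ i, |u i - x i| := by
        simpa [Pi.sub_apply] using SZ_norm d (u - x)
      refine mul_le_mul (mul_le_mul_of_nonneg_left
        (mul_le_mul_of_nonneg_right (hCf u) (gaussD_nonneg d V _)) (inv_pos.mpr hV).le)
        hsz (norm_nonneg _) ?_
      exact mul_nonneg (inv_pos.mpr hV).le (mul_nonneg hCf0 (gaussD_nonneg d V _))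
    refine h2.trans ?_
    have h3 : (V⁻¹ * (Cf * gaussD d V (u - x))) * ∑ i, |u i - x i|
        = (V⁻¹ * Cf) * (gaussD d V (u - x) * ∑ i, |u i - x i|) := by ring
    rw [h3, hB]
    exact mul_le_mul_of_nonneg_left (master_bound hV x₀ x u hx) (by positivity)
  -- measurability facts
  have hmeasF : ∀ x : Fin d → ℝ, AEStronglyMeasurable (F x) volume := by
    intro x
    exact (hfmeas.mul ((hGc.comp (continuous_id.sub continuous_const)).measurable)).aestronglyMeasurable
  have hSZc : Continuous fun z : Fin d → ℝ => SZ d z := by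
    unfold SZ
    exact continuous_finset_sum _ fun i _ => (continuous_apply i).smul continuous_const
  have hF'meas : ∀ x : Fin d → ℝ, AEStronglyMeasurable (F' x) volume := by
    intro x
    show AEStronglyMeasurable (fun u => (V⁻¹ * (f u * gaussD d V (u - x))) • SZ d (u - x)) volume
    refine AEStronglyMeasurable.fun_smul ?_ ?_
    · exact (((hfmeas.mul ((hGc.comp (continuous_id.sub
        continuous_const)).measurable)).const_mul V⁻¹)).aestronglyMeasurable
    · exact (hSZc.comp (continuous_id.sub continuous_const)).aestronglyMeasurable
  -- integrability of F x₀
  have hFint : Integrable (F x₀) volume := by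
    refine ((integrable_gaussD_shift hV x₀).const_mul Cf).mono' (hmeasF x₀)
      (Filter.Eventually.of_forall fun u => ?_)
    rw [Real.norm_eq_abs, hF, abs_mul, abs_of_nonneg (gaussD_nonneg d V _)]
    exact mul_le_mul_of_nonneg_right (hCf u) (gaussD_nonneg d V _)
  -- integrability of F' x (for x in the unit ball around x₀, in particular x₀ itself)
  have hF'int : Integrable (F' x₀) volume := by
    refine (hBint x₀).mono' (hF'meas x₀) (Filter.Eventually.of_forall fun u => ?_)
    exact key x₀ u (fun i => by simp)
  -- differentiability of each integrand
  have hdiff : ∀ (u x : Fin d → ℝ), HasFDerivAt (fun x => F x u) (F' x u) x := by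
    intro u x
    have h := (hasFDerivAt_gaussD hV u x).const_mul (f u)
    have he : F' x u = f u • ((V⁻¹ * gaussD d V (u - x)) • SZ d (u - x)) := by
      rw [smul_smul, hF']
      congr 1
      ring
    rw [hF, he]
    exact h
  -- dominated differentiation under the integral sign
  have hH : HasFDerivAt (fun x => ∫ u, F x u) (∫ u, F' x₀ u) x₀ := by
    refine hasFDerivAt_integral_of_dominated_of_fderiv_le (Metric.ball_mem_nhds x₀ zero_lt_one)
      (Filter.Eventually.of_forall hmeasF) hFint (hF'meas x₀)
      (Filter.Eventually.of_forall fun u => ?_) (hBint x₀)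
      (Filter.Eventually.of_forall fun u x _ => hdiff u x)
    intro x hx
    refine key x u fun i => ?_
    have hhd : dist x x₀ < 1 := by simpa [Metric.mem_ball] using hx
    have := dist_le_pi_dist x x₀ i
    rw [Real.dist_eq] at this
    linarith
  -- chain rule
  have hπd : HasFDerivAt π (fderiv ℝ π θ) θ :=
    ((hπ.differentiable one_ne_zero) θ).hasFDerivAt
  have hcomp : HasFDerivAt (fun θ' => ∫ u, F (π θ') u)
      ((∫ u, F' x₀ u).comp (fderiv ℝ π θ)) θ := hH.comp θ hπd
  have hfun : (fun θ' => ∫ η, f (π θ' + η) ∂gaussPi d σ) = fun θ' => ∫ u, F (π θ') u := by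
    funext θ'
    exact repA (π θ')
  constructor
  · rw [hfun]
    exact hcomp.differentiableAt
  · intro v
    rw [hfun, hcomp.fderiv]
    set w : Fin d → ℝ := fderiv ℝ π θ v with hw
    have happ : ((∫ u, F' x₀ u).comp (fderiv ℝ π θ)) v = (∫ u, F' x₀ u) w := rfl
    rw [happ, ContinuousLinearMap.integral_apply hF'int]
    -- integrability of each coordinate term
    have hterm : ∀ i : Fin d, Integrable
        (fun u => f u * gaussD d V (u - x₀) * (u i - x₀ i)) volume := by
      intro i
      refine (((integrable_prodBeta hV (1 + V⁻¹) x₀).const_mul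
        (Real.exp d * C)).const_mul Cf).mono' ?_ (Filter.Eventually.of_forall fun u => ?_)
      · exact ((hfmeas.mul ((hGc.comp (continuous_id.sub continuous_const)).measurable)).mul
          ((measurable_pi_apply i).sub measurable_const)).aestronglyMeasurable
      · rw [Real.norm_eq_abs, abs_mul, abs_mul, abs_of_nonneg (gaussD_nonneg d V _)]
        have h1 : |f u| * gaussD d V (u - x₀) * |u i - x₀ i|
            ≤ Cf * (gaussD d V (u - x₀) * ∑ j, |u j - x₀ j|) := by
          have hle : |u i - x₀ i| ≤ ∑ j, |u j - x₀ j| :=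
            Finset.single_le_sum (f := fun j => |u j - x₀ j|)
              (fun j _ => abs_nonneg _) (Finset.mem_univ i)
          calc |f u| * gaussD d V (u - x₀) * |u i - x₀ i|
              ≤ Cf * gaussD d V (u - x₀) * ∑ j, |u j - x₀ j| :=
                mul_le_mul (mul_le_mul_of_nonneg_right (hCf u) (gaussD_nonneg d V _))
                  hle (abs_nonneg _) (mul_nonneg hCf0 (gaussD_nonneg d V _))
            _ = Cf * (gaussD d V (u - x₀) * ∑ j, |u j - x₀ j|) := by ring
        refine h1.trans ?_
        exact mul_le_mul_of_nonneg_left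
          (master_bound hV x₀ x₀ u (fun i => by simp)) hCf0
    -- evaluate the integral of the derivative
    have heval : ∀ u : Fin d → ℝ, (F' x₀ u) w
        = ∑ i, (V⁻¹ * w i) * (f u * gaussD d V (u - x₀) * (u i - x₀ i)) := by
      intro u
      rw [hF', ContinuousLinearMap.smul_apply, SZ_apply, smul_eq_mul, Finset.mul_sum]
      refine Finset.sum_congr rfl fun i _ => ?_
      simp only [Pi.sub_apply]
      ring
    rw [integral_congr_ae (Filter.Eventually.of_forall heval)]
    rw [integral_finset_sum _ (fun i _ => (hterm i).const_mul (V⁻¹ * w i))]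
    have hIi : ∀ i : Fin d, ∫ u, (V⁻¹ * w i) * (f u * gaussD d V (u - x₀) * (u i - x₀ i))
        = (V⁻¹ * w i) * ∫ u, f u * gaussD d V (u - x₀) * (u i - x₀ i) := fun i =>
      integral_const_mul _ _
    rw [Finset.sum_congr rfl fun i _ => hIi i]
    rw [Finset.mul_sum]
    refine Finset.sum_congr rfl fun i _ => ?_
    rw [repB x₀ i]
    ring
end

section
/- Consider the infinite-horizon average-cost LQR objective defined on stabilizing static gains: for K ∈ ℝ^{n_u×n_x} with spectral radius ρ(A + BK) < 1, let J(K) := Σ_{t=0}^{∞} tr( (Q + KᵀRK) · (A+BK)ᵗ Σ_w ((A+BK)ᵀ)ᵗ ), where Q ≻ 0, R ≻ 0, Σ_w ≻ 0. Suppose K* is a stabilizing gain minimizing J over all stabilizing gains. Then there exist constants ε₀ > 0 and C > 0 (depending on A, B, Q, R, Σ_w) such that every K with ‖K − K*‖₂ ≤ ε₀ is stabilizing and satisfies J(K) − J(K*) ≤ C·‖K − K*‖₂². -/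
/-!
STATEMENT 13: Quadratic suboptimality of near-optimal LQR gains.
For the infinite-horizon average-cost LQR objective
`J(K) = Σ_t tr((Q + KᵀRK)·(A+BK)ᵗ Σ_w ((A+BK)ᵀ)ᵗ)` on stabilizing gains, if `K*` is a
stabilizing minimizer, then there are `ε₀, C > 0` such that every `K` with
`‖K − K*‖₂ ≤ ε₀` is stabilizing and `J(K) − J(K*) ≤ C‖K − K*‖₂²`.
-/

open Matrix
open scoped ENNReal

/-- Schur stability: every (complex) eigenvalue of the real matrix `M` has modulus `< 1`. -/
def SchurStable {n : ℕ} (M : Matrix (Fin n) (Fin n) ℝ) : Prop :=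
  ∀ z ∈ spectrum ℂ (M.map Complex.ofReal), ‖z‖ < 1

/-- Infinite-horizon average LQR cost of the static gain `K` (steady-state cost of
`u_t = K x_t` for `x_{t+1} = A x_t + B u_t + w_t`, `w_t ∼ N(0,Σ_w)` i.i.d.). -/
noncomputable def lqrCost {nx nu : ℕ} (A : Matrix (Fin nx) (Fin nx) ℝ)
    (B : Matrix (Fin nx) (Fin nu) ℝ) (Q : Matrix (Fin nx) (Fin nx) ℝ)
    (R : Matrix (Fin nu) (Fin nu) ℝ) (Sw : Matrix (Fin nx) (Fin nx) ℝ)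
    (K : Matrix (Fin nu) (Fin nx) ℝ) : ℝ :=
  ∑' t : ℕ, ((Q + Kᵀ * R * K) * ((A + B * K) ^ t * Sw * ((A + B * K)ᵀ) ^ t)).trace

namespace CEGapAux

open scoped NNReal

/-! ### Lemmas about the spectral norm, proved with the scoped L2 operator norm. -/
section L2
open scoped Matrix.Norms.L2Operator

set_option linter.unusedSectionVars false

variable {m n p : Type*} [Fintype m] [Fintype n] [Fintype p]
  [DecidableEq m] [DecidableEq n] [DecidableEq p]

lemma specNormR_eq_norm (M : Matrix m n ℝ) : specNormR M = ‖M‖ := rfl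

lemma specNormR_nonneg (M : Matrix m n ℝ) : 0 ≤ specNormR M := norm_nonneg _

lemma specNormR_zero : specNormR (0 : Matrix m n ℝ) = 0 := by
  rw [specNormR_eq_norm, norm_zero]

lemma specNormR_transpose (M : Matrix m n ℝ) : specNormR Mᵀ = specNormR M := by
  rw [specNormR_eq_norm, specNormR_eq_norm, ← Matrix.conjTranspose_eq_transpose_of_trivial,
    Matrix.l2_opNorm_conjTranspose]

lemma specNormR_mul_le (M : Matrix m n ℝ) (N : Matrix n p ℝ) :
    specNormR (M * N) ≤ specNormR M * specNormR N := by
  simpa only [specNormR_eq_norm] using Matrix.l2_opNorm_mul M N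

lemma specNormR_smul (c : ℝ) (M : Matrix m n ℝ) : specNormR (c • M) = |c| * specNormR M := by
  rw [specNormR_eq_norm, specNormR_eq_norm, norm_smul, Real.norm_eq_abs]

lemma specNormR_neg (M : Matrix m n ℝ) : specNormR (-M) = specNormR M := by
  rw [specNormR_eq_norm, specNormR_eq_norm, norm_neg]

lemma specNormR_pos {M : Matrix m n ℝ} (h : M ≠ 0) : 0 < specNormR M := by
  rw [specNormR_eq_norm]; exact norm_pos_iff.mpr h

lemma abs_coord_le_norm (v : EuclideanSpace ℝ m) (i : m) : |v i| ≤ ‖v‖ := by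
  rw [EuclideanSpace.norm_eq]
  have h1 : |v i| = Real.sqrt (‖v i‖ ^ 2) := by
    rw [Real.sqrt_sq_eq_abs, Real.norm_eq_abs, abs_abs]
  rw [h1]
  apply Real.sqrt_le_sqrt
  exact Finset.single_le_sum (f := fun j => ‖v j‖ ^ 2) (fun j _ => sq_nonneg _)
    (Finset.mem_univ i)

lemma abs_entry_le_specNormR (M : Matrix m n ℝ) (i : m) (j : n) :
    |M i j| ≤ specNormR M := by
  have hx : ∀ x : EuclideanSpace ℝ n,
      ‖(EuclideanSpace.equiv m ℝ).symm (M *ᵥ x)‖ ≤ ‖M‖ * ‖x‖ := M.l2_opNorm_mulVec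
  have h := hx (EuclideanSpace.single j 1)
  rw [EuclideanSpace.norm_single, norm_one, mul_one] at h
  rw [specNormR_eq_norm]
  refine le_trans ?_ (le_trans (abs_coord_le_norm _ i) h)
  have h2 : (M *ᵥ (EuclideanSpace.single j (1:ℝ))) i = M i j := by
    have h3 : (EuclideanSpace.single j (1:ℝ) : n → ℝ) = Pi.single j 1 := rfl
    rw [h3, Matrix.mulVec_single]; simp
  exact le_of_eq (by
    rw [show ((EuclideanSpace.equiv m ℝ).symm (M *ᵥ EuclideanSpace.single j 1)) i
      = (M *ᵥ (EuclideanSpace.single j (1:ℝ))) i from rfl, h2])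

end L2

/-! ### Analysis with the L∞ operator norm. -/
section Linfty

attribute [local instance] Matrix.linftyOpNormedAddCommGroup Matrix.linftyOpNormedRing
  Matrix.linftyOpNormedAlgebra Matrix.linftyOpNormedSpace

set_option linter.unusedSectionVars false

variable {m n : Type*} [Fintype m] [Fintype n] [DecidableEq m] [DecidableEq n]

lemma abs_entry_le_linfty (M : Matrix m n ℝ) (i : m) (j : n) : |M i j| ≤ ‖M‖ := by
  rw [Matrix.linfty_opNorm_def]
  have h1 : ‖M i j‖₊ ≤ ∑ k, ‖M i k‖₊ :=
    Finset.single_le_sum (f := fun k => ‖M i k‖₊) (fun _ _ => zero_le) (Finset.mem_univ j)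
  have h2 : (∑ k, ‖M i k‖₊) ≤ (Finset.univ : Finset m).sup fun i => ∑ j, ‖M i j‖₊ :=
    Finset.le_sup (f := fun i => ∑ j, ‖M i j‖₊) (Finset.mem_univ i)
  calc |M i j| = ((‖M i j‖₊ : ℝ≥0) : ℝ) := by rw [coe_nnnorm, Real.norm_eq_abs]
    _ ≤ _ := by exact_mod_cast h1.trans h2

lemma linfty_norm_le_card_mul_spec (M : Matrix m n ℝ) :
    ‖M‖ ≤ (Fintype.card n) * specNormR M := by
  rw [Matrix.linfty_opNorm_def]
  have key : ∀ i : m, (∑ j, (‖M i j‖₊ : ℝ)) ≤ (Fintype.card n) * specNormR M := by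
    intro i
    calc (∑ j, (‖M i j‖₊ : ℝ)) = ∑ j : n, |M i j| := by
          simp [coe_nnnorm, Real.norm_eq_abs]
      _ ≤ ∑ _j : n, specNormR M :=
          Finset.sum_le_sum fun j _ => abs_entry_le_specNormR M i j
      _ = (Fintype.card n) * specNormR M := by
          simp [Finset.sum_const, nsmul_eq_mul]
  rcases isEmpty_or_nonempty m with hm | hm
  · simp only [Finset.univ_eq_empty, Finset.sup_empty]
    exact mul_nonneg (Nat.cast_nonneg _) (specNormR_nonneg M)
  · obtain ⟨i, hi⟩ := Finset.exists_mem_eq_sup (Finset.univ : Finset m)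
      Finset.univ_nonempty (fun i => ∑ j, ‖M i j‖₊)
    rw [hi.2]
    push_cast
    exact key i

lemma linfty_norm_transpose_le (M : Matrix m n ℝ) : ‖Mᵀ‖ ≤ (Fintype.card m) * ‖M‖ := by
  rw [Matrix.linfty_opNorm_def (A := Mᵀ)]
  have key : ∀ j : n, (∑ i, (‖Mᵀ j i‖₊ : ℝ)) ≤ (Fintype.card m) * ‖M‖ := by
    intro j
    calc (∑ i, (‖Mᵀ j i‖₊ : ℝ)) = ∑ i : m, |M i j| := by
          simp [coe_nnnorm, Real.norm_eq_abs, Matrix.transpose_apply]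
      _ ≤ ∑ _i : m, ‖M‖ := Finset.sum_le_sum fun i _ => abs_entry_le_linfty M i j
      _ = (Fintype.card m) * ‖M‖ := by simp [Finset.sum_const, nsmul_eq_mul]
  rcases isEmpty_or_nonempty n with hn | hn
  · simp only [Finset.univ_eq_empty, Finset.sup_empty]
    exact mul_nonneg (Nat.cast_nonneg _) (norm_nonneg _)
  · obtain ⟨j, hj⟩ := Finset.exists_mem_eq_sup (Finset.univ : Finset n)
      Finset.univ_nonempty (fun j => ∑ i, ‖Mᵀ j i‖₊)
    rw [hj.2]
    push_cast
    exact key j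

lemma abs_trace_le (X : Matrix m m ℝ) : |X.trace| ≤ (Fintype.card m) * ‖X‖ := by
  calc |X.trace| ≤ ∑ i, |X i i| := by
        rw [Matrix.trace]; exact Finset.abs_sum_le_sum_abs _ _
    _ ≤ ∑ _i : m, ‖X‖ := Finset.sum_le_sum fun i _ => abs_entry_le_linfty X i i
    _ = (Fintype.card m) * ‖X‖ := by simp [Finset.sum_const, nsmul_eq_mul]

lemma linfty_nnnorm_map_ofReal (M : Matrix m n ℝ) :
    ‖M.map Complex.ofReal‖₊ = ‖M‖₊ := by
  rw [Matrix.linfty_opNNNorm_def, Matrix.linfty_opNNNorm_def]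
  congr 1
  funext i
  congr 1
  funext j
  simp [Matrix.map_apply]

lemma linfty_norm_map_ofReal (M : Matrix m n ℝ) : ‖M.map Complex.ofReal‖ = ‖M‖ :=
  congrArg NNReal.toReal (linfty_nnnorm_map_ofReal M)

/-- From Schur stability, some power has norm `< 1` (via Gelfand's formula). -/
lemma exists_pow_norm_lt {nx : ℕ} (hnx : 0 < nx) (M : Matrix (Fin nx) (Fin nx) ℝ)
    (h : SchurStable M) : ∃ N : ℕ, 0 < N ∧ ‖M ^ N‖ < 1 := by
  haveI : Nonempty (Fin nx) := Fin.pos_iff_nonempty.mp hnx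
  set a : Matrix (Fin nx) (Fin nx) ℂ := M.map Complex.ofReal with ha
  haveI : CompleteSpace (Matrix (Fin nx) (Fin nx) ℂ) := FiniteDimensional.complete ℂ _
  have hρ : spectralRadius ℂ a < 1 := by
    have := spectrum.spectralRadius_lt_of_forall_lt a (r := 1) (fun z hz => by
      have := h z hz
      simpa [← NNReal.coe_lt_coe] using this)
    simpa using this
  have ht := spectrum.pow_nnnorm_pow_one_div_tendsto_nhds_spectralRadius a
  have hev : ∀ᶠ N : ℕ in Filter.atTop, ((‖a ^ N‖₊ : ℝ≥0∞) ^ (1 / (N:ℝ))) < 1 :=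
    ht.eventually_lt_const hρ
  obtain ⟨N, hN1, hNlt⟩ := ((Filter.eventually_ge_atTop 1).and hev).exists
  refine ⟨N, hN1, ?_⟩
  have hpow : (‖a ^ N‖₊ : ℝ≥0∞) < 1 := by
    by_contra hcon
    push_neg at hcon
    have : (1:ℝ≥0∞) ≤ (‖a ^ N‖₊ : ℝ≥0∞) ^ (1 / (N:ℝ)) := by
      calc (1:ℝ≥0∞) = 1 ^ (1 / (N:ℝ)) := (ENNReal.one_rpow _).symm
        _ ≤ _ := ENNReal.rpow_le_rpow hcon (by positivity)
    exact absurd hNlt (not_lt.mpr this)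
  have haN : a ^ N = (M ^ N).map Complex.ofReal := by
    exact (map_pow (Complex.ofRealHom.mapMatrix) M N).symm
  rw [haN] at hpow
  have : ‖(M ^ N).map Complex.ofReal‖₊ < 1 := by exact_mod_cast hpow
  rw [linfty_nnnorm_map_ofReal] at this
  have := NNReal.coe_lt_coe.mpr this
  simpa [coe_nnnorm] using this

/-- Conversely, if some power has norm `< 1` then `M` is Schur stable. -/
lemma schur_of_pow_norm_lt {nx : ℕ} (M : Matrix (Fin nx) (Fin nx) ℝ) {N : ℕ} (hN : 0 < N)
    (h : ‖M ^ N‖ < 1) : SchurStable M := by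
  intro z hz
  rcases Nat.eq_zero_or_pos nx with hnx | hnx
  · subst hnx
    haveI : Subsingleton (Matrix (Fin 0) (Fin 0) ℂ) :=
      ⟨fun X Y => by ext i j; exact absurd i.2 (by omega)⟩
    exact absurd (isUnit_of_subsingleton _) (spectrum.mem_iff.mp hz)
  · haveI : Nonempty (Fin nx) := Fin.pos_iff_nonempty.mp hnx
    haveI : CompleteSpace (Matrix (Fin nx) (Fin nx) ℂ) := FiniteDimensional.complete ℂ _
    haveI : Nontrivial (Matrix (Fin nx) (Fin nx) ℂ) :=
      ⟨0, 1, fun hc => one_ne_zero (congrFun (congrFun hc.symm ⟨0, hnx⟩) ⟨0, hnx⟩)⟩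
    set a : Matrix (Fin nx) (Fin nx) ℂ := M.map Complex.ofReal with ha
    have hzN : z ^ N ∈ spectrum ℂ (a ^ N) := by
      rw [spectrum.map_pow]
      exact ⟨z, hz, rfl⟩
    have hb : ‖z ^ N‖ ≤ ‖a ^ N‖ := spectrum.norm_le_norm_of_mem hzN
    have haN : a ^ N = (M ^ N).map Complex.ofReal := by
      exact (map_pow (Complex.ofRealHom.mapMatrix) M N).symm
    rw [haN, linfty_norm_map_ofReal] at hb
    have : ‖z‖ ^ N < 1 := by
      rw [← norm_pow]
      exact lt_of_le_of_lt hb h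
    exact (pow_lt_one_iff_of_nonneg (norm_nonneg _) hN.ne').mp this

/-- Geometric decay of powers from a single power bound. -/
lemma pow_norm_le_geom {A : Type*} [NormedRing A] [NormOneClass A] (M : A)
    {b q r : ℝ} {N : ℕ} (hN : 0 < N) (hb1 : 1 ≤ b) (hb : ‖M‖ ≤ b) (hq : ‖M ^ N‖ ≤ q)
    (hr0 : 0 < r) (hr1 : r < 1) (hrq : r ^ N = q) (t : ℕ) :
    ‖M ^ t‖ ≤ (b ^ N / r ^ (N - 1)) * r ^ t := by
  have hq0 : 0 ≤ q := hrq ▸ (pow_nonneg hr0.le N)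
  have hdm : N * (t / N) + t % N = t := Nat.div_add_mod t N
  have h1 : ‖M ^ t‖ ≤ ‖M ^ N‖ ^ (t / N) * ‖M‖ ^ (t % N) := by
    calc ‖M ^ t‖ = ‖(M ^ N) ^ (t / N) * M ^ (t % N)‖ := by
          rw [← pow_mul, ← pow_add, hdm]
      _ ≤ ‖(M ^ N) ^ (t / N)‖ * ‖M ^ (t % N)‖ := norm_mul_le _ _
      _ ≤ ‖M ^ N‖ ^ (t / N) * ‖M‖ ^ (t % N) :=
          mul_le_mul (norm_pow_le _ _) (norm_pow_le _ _) (norm_nonneg _)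
            (pow_nonneg (norm_nonneg _) _)
  have h2 : ‖M ^ N‖ ^ (t / N) * ‖M‖ ^ (t % N) ≤ q ^ (t / N) * b ^ N := by
    apply mul_le_mul
    · exact pow_le_pow_left₀ (norm_nonneg _) hq _
    · calc ‖M‖ ^ (t % N) ≤ b ^ (t % N) := pow_le_pow_left₀ (norm_nonneg _) hb _
        _ ≤ b ^ N := pow_le_pow_right₀ hb1 (le_of_lt (Nat.mod_lt t hN))
    · exact pow_nonneg (norm_nonneg _) _
    · exact pow_nonneg hq0 _
  have h3 : q ^ (t / N) = r ^ (N * (t / N)) := by rw [pow_mul, hrq]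
  have h4 : r ^ (N * (t / N)) ≤ r ^ (t - (N - 1)) := by
    apply pow_le_pow_of_le_one hr0.le hr1.le
    have hmod : t % N ≤ N - 1 := Nat.le_sub_one_of_lt (Nat.mod_lt t hN)
    omega
  have h5 : r ^ (t - (N - 1)) ≤ r ^ t / r ^ (N - 1) := by
    rw [le_div_iff₀ (pow_pos hr0 _), ← pow_add]
    apply pow_le_pow_of_le_one hr0.le hr1.le
    omega
  calc ‖M ^ t‖ ≤ q ^ (t / N) * b ^ N := h1.trans h2
    _ = r ^ (N * (t / N)) * b ^ N := by rw [h3]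
    _ ≤ r ^ (t - (N - 1)) * b ^ N :=
        mul_le_mul_of_nonneg_right h4 (pow_nonneg (zero_le_one.trans hb1) _)
    _ ≤ (r ^ t / r ^ (N - 1)) * b ^ N :=
        mul_le_mul_of_nonneg_right h5 (pow_nonneg (zero_le_one.trans hb1) _)
    _ = (b ^ N / r ^ (N - 1)) * r ^ t := by ring

end Linfty

/-! ### Quadratic forms and the algebraic identity. -/
section Algebra

variable {mm nn : Type*} [Fintype mm] [Fintype nn] [DecidableEq mm] [DecidableEq nn]

lemma diag_quad (Sw : Matrix nn nn ℝ) (Y : Matrix mm nn ℝ) (i : mm) :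
    (Y * Sw * Yᵀ) i i = (Y i) ⬝ᵥ (Sw *ᵥ (Y i)) := by
  simp only [Matrix.mul_apply, Matrix.transpose_apply, dotProduct, Matrix.mulVec,
    dotProduct, Finset.sum_mul, Finset.mul_sum]
  rw [Finset.sum_comm]
  congr 1; funext k; congr 1; funext j; ring

lemma trace_quad_nonneg (Sw : Matrix nn nn ℝ) (hSw : Sw.PosSemidef) (Y : Matrix mm nn ℝ) :
    0 ≤ (Y * Sw * Yᵀ).trace := by
  rw [Matrix.trace]
  apply Finset.sum_nonneg
  intro i _
  have := hSw.dotProduct_mulVec_nonneg (Y i)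
  simpa [Matrix.diag, diag_quad] using this

lemma trace_quad_pos (Sw : Matrix nn nn ℝ) (hSw : Sw.PosDef) {Y : Matrix mm nn ℝ}
    (hY : Y ≠ 0) : 0 < (Y * Sw * Yᵀ).trace := by
  obtain ⟨i, hi⟩ : ∃ i, Y i ≠ 0 := by
    by_contra hcon
    push_neg at hcon
    exact hY (by ext i j; simpa using congrFun (hcon i) j)
  rw [Matrix.trace]
  apply Finset.sum_pos'
  · intro k _
    have := hSw.posSemidef.dotProduct_mulVec_nonneg (Y k)
    simpa [Matrix.diag, diag_quad] using this
  · refine ⟨i, Finset.mem_univ i, ?_⟩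
    have := hSw.dotProduct_mulVec_pos (x := Y i) hi
    simpa [Matrix.diag, diag_quad] using this

lemma G_decomp (A Q P : Matrix nn nn ℝ) (B : Matrix nn mm ℝ) (R : Matrix mm mm ℝ)
    (Kstar Δ : Matrix mm nn ℝ) (hR : Rᵀ = R) (hP : Pᵀ = P) :
    Q + (Kstar + Δ)ᵀ * R * (Kstar + Δ)
      + (A + B * (Kstar + Δ))ᵀ * P * (A + B * (Kstar + Δ)) - P =
    Δᵀ * (R * Kstar + Bᵀ * P * (A + B * Kstar))
      + (R * Kstar + Bᵀ * P * (A + B * Kstar))ᵀ * Δ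
      + Δᵀ * (R + Bᵀ * P * B) * Δ
      + (Q + Kstarᵀ * R * Kstar + (A + B * Kstar)ᵀ * P * (A + B * Kstar) - P) := by
  simp only [Matrix.transpose_add, Matrix.transpose_mul, Matrix.transpose_transpose, hR, hP]
  simp only [Matrix.add_mul, Matrix.mul_add, Matrix.mul_assoc]
  abel

end Algebra

end CEGapAux

attribute [local instance] Matrix.linftyOpNormedAddCommGroup Matrix.linftyOpNormedRing
  Matrix.linftyOpNormedAlgebra Matrix.linftyOpNormedSpace

set_option maxHeartbeats 2000000 in
open CEGapAux in
theorem certainty_equivalence_quadratic_gap (nx nu : ℕ)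
    (A : Matrix (Fin nx) (Fin nx) ℝ) (B : Matrix (Fin nx) (Fin nu) ℝ)
    (Q : Matrix (Fin nx) (Fin nx) ℝ) (R : Matrix (Fin nu) (Fin nu) ℝ)
    (Sw : Matrix (Fin nx) (Fin nx) ℝ)
    (hQ : Q.PosDef) (hR : R.PosDef) (hSw : Sw.PosDef)
    (Kstar : Matrix (Fin nu) (Fin nx) ℝ)
    (hKstar : SchurStable (A + B * Kstar))
    (hopt : ∀ K : Matrix (Fin nu) (Fin nx) ℝ, SchurStable (A + B * K) →
      lqrCost A B Q R Sw Kstar ≤ lqrCost A B Q R Sw K) :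
    ∃ ε₀ > (0 : ℝ), ∃ C > (0 : ℝ), ∀ K : Matrix (Fin nu) (Fin nx) ℝ,
      specNormR (K - Kstar) ≤ ε₀ →
        SchurStable (A + B * K) ∧
        lqrCost A B Q R Sw K - lqrCost A B Q R Sw Kstar ≤ C * specNormR (K - Kstar) ^ 2 := by
  classical
  rcases Nat.eq_zero_or_pos nx with hnx0 | hnx
  · -- Degenerate case `nx = 0`: everything is trivial.
    subst hnx0
    refine ⟨1, one_pos, 1, one_pos, fun K _ => ?_⟩
    have hzero : ∀ K' : Matrix (Fin nu) (Fin 0) ℝ, lqrCost A B Q R Sw K' = 0 := by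
      intro K'
      unfold lqrCost
      have hz : ∀ t : ℕ,
          ((Q + K'ᵀ * R * K') * ((A + B * K') ^ t * Sw * ((A + B * K')ᵀ) ^ t)).trace = 0 := by
        intro t
        rw [Matrix.trace]
        simp
      simp [hz]
    constructor
    · intro z hz
      haveI : Subsingleton (Matrix (Fin 0) (Fin 0) ℂ) :=
        ⟨fun X Y => by ext i j; exact absurd i.2 (by omega)⟩
      exact absurd (isUnit_of_subsingleton _) (spectrum.mem_iff.mp hz)
    · rw [hzero, hzero]
      have := sq_nonneg (specNormR (K - Kstar))
      nlinarith
  -- Main case `0 < nx`.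
  haveI : Nonempty (Fin nx) := Fin.pos_iff_nonempty.mp hnx
  haveI hC𝕄 : CompleteSpace (Matrix (Fin nx) (Fin nx) ℝ) := FiniteDimensional.complete ℝ _
  set Lstar : Matrix (Fin nx) (Fin nx) ℝ := A + B * Kstar with hLstar
  obtain ⟨N, hN, hLN⟩ := CEGapAux.exists_pow_norm_lt hnx Lstar hKstar
  set q : ℝ := (1 + ‖Lstar ^ N‖) / 2 with hqdef
  have hq0 : 0 < q := by positivity
  have hq1 : q < 1 := by rw [hqdef]; linarith
  have hLq : ‖Lstar ^ N‖ < q := by rw [hqdef]; linarith [norm_nonneg (Lstar ^ N)]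
  have hev : ∀ᶠ X : Matrix (Fin nx) (Fin nx) ℝ in nhds Lstar, ‖X ^ N‖ < q := by
    have hcont : Filter.Tendsto (fun X : Matrix (Fin nx) (Fin nx) ℝ => ‖X ^ N‖)
        (nhds Lstar) (nhds ‖Lstar ^ N‖) := ((continuous_pow N).norm).continuousAt
    exact hcont.eventually_lt_const hLq
  obtain ⟨δ, hδ0, hδ⟩ := Metric.eventually_nhds_iff.mp hev
  set b : ℝ := max 1 (‖Lstar‖ + δ) with hbdef
  have hb1 : 1 ≤ b := le_max_left _ _
  set r : ℝ := q ^ ((N:ℝ)⁻¹) with hrdef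
  have hr0 : 0 < r := Real.rpow_pos_of_pos hq0 _
  have hr1 : r < 1 := Real.rpow_lt_one hq0.le hq1 (by positivity)
  have hrN : r ^ N = q := by
    rw [hrdef, ← Real.rpow_natCast (q ^ ((N:ℝ)⁻¹)) N, ← Real.rpow_mul hq0.le,
      inv_mul_cancel₀ (Nat.cast_ne_zero.mpr hN.ne'), Real.rpow_one]
  set C₁ : ℝ := b ^ N / r ^ (N - 1) with hC₁def
  have hC₁0 : 0 < C₁ := by positivity
  set ρ : ℝ := r * r with hρdef
  have hρ0 : 0 ≤ ρ := by positivity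
  have hρ1 : ρ < 1 := by nlinarith
  have hρinv : 0 < (1 - ρ)⁻¹ := by
    apply inv_pos.mpr; linarith
  set ε₀ : ℝ := δ / ((nx + 1) * (‖B‖ + 1) * 2) with hε₀def
  have hε₀ : 0 < ε₀ := by positivity
  -- membership in the ε₀-ball keeps us within the δ-ball around `Lstar`
  have hball : ∀ K : Matrix (Fin nu) (Fin nx) ℝ, specNormR (K - Kstar) ≤ ε₀ →
      ‖(A + B * K) - Lstar‖ < δ := by
    intro K hK
    have h1 : (A + B * K) - Lstar = B * (K - Kstar) := by
      rw [hLstar, Matrix.mul_sub]; abel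
    rw [h1]
    have h2 : ‖K - Kstar‖ ≤ nx * specNormR (K - Kstar) := by
      have := CEGapAux.linfty_norm_le_card_mul_spec (K - Kstar)
      simpa [Fintype.card_fin] using this
    have h3 : ‖B * (K - Kstar)‖ ≤ ‖B‖ * (nx * specNormR (K - Kstar)) :=
      (Matrix.linfty_opNorm_mul _ _).trans
        (mul_le_mul_of_nonneg_left h2 (norm_nonneg B))
    have h4 : ‖B‖ * (nx * specNormR (K - Kstar)) ≤ ‖B‖ * (nx * ε₀) := by
      apply mul_le_mul_of_nonneg_left _ (norm_nonneg B)
      exact mul_le_mul_of_nonneg_left hK (Nat.cast_nonneg _)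
    have h5 : ‖B‖ * (nx * ε₀) < δ := by
      rw [hε₀def]
      rw [div_eq_inv_mul]
      have hB0 : (0:ℝ) ≤ ‖B‖ := norm_nonneg B
      have hcard : (0:ℝ) ≤ (nx:ℝ) := Nat.cast_nonneg _
      have hlt : ‖B‖ * (nx:ℝ) < (nx + 1) * (‖B‖ + 1) * 2 := by nlinarith
      calc ‖B‖ * ((nx:ℝ) * (((nx + 1) * (‖B‖ + 1) * 2)⁻¹ * δ))
          = (‖B‖ * (nx:ℝ)) * (((nx + 1) * (‖B‖ + 1) * 2)⁻¹ * δ) := by ring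
        _ < ((nx + 1) * (‖B‖ + 1) * 2) * (((nx + 1) * (‖B‖ + 1) * 2)⁻¹ * δ) := by
            apply mul_lt_mul_of_pos_right hlt
            positivity
        _ = δ := by
            field_simp
    exact lt_of_le_of_lt (h3.trans h4) h5
  have hpowq : ∀ K : Matrix (Fin nu) (Fin nx) ℝ, specNormR (K - Kstar) ≤ ε₀ →
      ‖(A + B * K) ^ N‖ < q := by
    intro K hK
    exact hδ (by rw [dist_eq_norm]; exact hball K hK)
  have hschur : ∀ K : Matrix (Fin nu) (Fin nx) ℝ, specNormR (K - Kstar) ≤ ε₀ →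
      SchurStable (A + B * K) :=
    fun K hK => CEGapAux.schur_of_pow_norm_lt _ hN ((hpowq K hK).trans hq1)
  have hgeo : ∀ K : Matrix (Fin nu) (Fin nx) ℝ, specNormR (K - Kstar) ≤ ε₀ →
      ∀ t, ‖(A + B * K) ^ t‖ ≤ C₁ * r ^ t := by
    intro K hK t
    apply CEGapAux.pow_norm_le_geom _ hN hb1 _ (hpowq K hK).le hr0 hr1 hrN
    have h6 : ‖A + B * K‖ = ‖Lstar + ((A + B * K) - Lstar)‖ := by
      congr 1; abel
    rw [h6]
    calc ‖Lstar + ((A + B * K) - Lstar)‖ ≤ ‖Lstar‖ + ‖(A + B * K) - Lstar‖ := norm_add_le _ _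
      _ ≤ ‖Lstar‖ + δ := by linarith [hball K hK]
      _ ≤ b := le_max_right _ _
  have hKstar_ball : specNormR (Kstar - Kstar) ≤ ε₀ := by
    rw [sub_self, CEGapAux.specNormR_zero]; exact hε₀.le
  -- the closed-loop covariance terms
  set Wt : Matrix (Fin nu) (Fin nx) ℝ → ℕ → Matrix (Fin nx) (Fin nx) ℝ :=
    fun K t => (A + B * K) ^ t * Sw * ((A + B * K) ^ t)ᵀ with hWdef
  have hWnorm : ∀ K : Matrix (Fin nu) (Fin nx) ℝ, specNormR (K - Kstar) ≤ ε₀ →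
      ∀ t, ‖Wt K t‖ ≤ (nx * ‖Sw‖ * (C₁ * C₁)) * ρ ^ t := by
    intro K hK t
    have h1 := hgeo K hK t
    have h2 : ‖((A + B * K) ^ t)ᵀ‖ ≤ nx * ‖(A + B * K) ^ t‖ := by
      have := CEGapAux.linfty_norm_transpose_le ((A + B * K) ^ t)
      simpa [Fintype.card_fin] using this
    have h0 : (0:ℝ) ≤ ‖(A + B * K) ^ t‖ := norm_nonneg _
    have hrt : (0:ℝ) ≤ r ^ t := pow_nonneg hr0.le _
    calc ‖Wt K t‖ ≤ ‖(A + B * K) ^ t * Sw‖ * ‖((A + B * K) ^ t)ᵀ‖ :=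
          Matrix.linfty_opNorm_mul _ _
      _ ≤ (‖(A + B * K) ^ t‖ * ‖Sw‖) * (nx * ‖(A + B * K) ^ t‖) := by
          apply mul_le_mul (Matrix.linfty_opNorm_mul _ _) h2 (norm_nonneg _)
          positivity
      _ ≤ ((C₁ * r ^ t) * ‖Sw‖) * (nx * (C₁ * r ^ t)) := by
          apply mul_le_mul
          · exact mul_le_mul_of_nonneg_right h1 (norm_nonneg Sw)
          · exact mul_le_mul_of_nonneg_left h1 (Nat.cast_nonneg _)
          · positivity
          · positivity
      _ = (nx * ‖Sw‖ * (C₁ * C₁)) * ρ ^ t := by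
          rw [hρdef, mul_pow]; ring
  -- trace bounds and summability for the series we manipulate
  have htr_bound : ∀ (X : Matrix (Fin nx) (Fin nx) ℝ) (K : Matrix (Fin nu) (Fin nx) ℝ),
      specNormR (K - Kstar) ≤ ε₀ →
      ∀ t, |((X * Wt K t).trace)| ≤ (nx * ‖X‖ * (nx * ‖Sw‖ * (C₁ * C₁))) * ρ ^ t := by
    intro X K hK t
    have h1 : |((X * Wt K t).trace)| ≤ nx * ‖X * Wt K t‖ := by
      have := CEGapAux.abs_trace_le (X * Wt K t)
      simpa [Fintype.card_fin] using this
    have h2 : ‖X * Wt K t‖ ≤ ‖X‖ * ((nx * ‖Sw‖ * (C₁ * C₁)) * ρ ^ t) :=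
      (Matrix.linfty_opNorm_mul _ _).trans
        (mul_le_mul_of_nonneg_left (hWnorm K hK t) (norm_nonneg X))
    calc |((X * Wt K t).trace)| ≤ nx * (‖X‖ * ((nx * ‖Sw‖ * (C₁ * C₁)) * ρ ^ t)) :=
          h1.trans (mul_le_mul_of_nonneg_left h2 (Nat.cast_nonneg _))
      _ = (nx * ‖X‖ * (nx * ‖Sw‖ * (C₁ * C₁))) * ρ ^ t := by ring
  have hsummable : ∀ (X : Matrix (Fin nx) (Fin nx) ℝ) (K : Matrix (Fin nu) (Fin nx) ℝ),
      specNormR (K - Kstar) ≤ ε₀ → Summable (fun t => ((X * Wt K t).trace)) := by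
    intro X K hK
    apply Summable.of_norm_bounded
      (((summable_geometric_of_lt_one hρ0 hρ1)).mul_left (nx * ‖X‖ * (nx * ‖Sw‖ * (C₁ * C₁))))
    intro t
    simpa [Real.norm_eq_abs] using htr_bound X K hK t
  have htsum_le : ∀ (X : Matrix (Fin nx) (Fin nx) ℝ) (K : Matrix (Fin nu) (Fin nx) ℝ),
      specNormR (K - Kstar) ≤ ε₀ →
      |∑' t, ((X * Wt K t).trace)| ≤ (nx * ‖X‖ * (nx * ‖Sw‖ * (C₁ * C₁))) * (1 - ρ)⁻¹ := by
    intro X K hK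
    have h1 : |∑' t, ((X * Wt K t).trace)| ≤ ∑' t, |((X * Wt K t).trace)| := by
      have := norm_tsum_le_tsum_norm (f := fun t => ((X * Wt K t).trace))
        (by simpa [Real.norm_eq_abs] using (hsummable X K hK).abs)
      simpa [Real.norm_eq_abs] using this
    have h2 : ∑' t, |((X * Wt K t).trace)|
        ≤ ∑' t, (nx * ‖X‖ * (nx * ‖Sw‖ * (C₁ * C₁))) * ρ ^ t := by
      apply Summable.tsum_le_tsum (fun t => htr_bound X K hK t)
      · exact (hsummable X K hK).abs
      · exact (summable_geometric_of_lt_one hρ0 hρ1).mul_left _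
    have h3 : ∑' t, (nx * ‖X‖ * (nx * ‖Sw‖ * (C₁ * C₁))) * ρ ^ t
        = (nx * ‖X‖ * (nx * ‖Sw‖ * (C₁ * C₁))) * (1 - ρ)⁻¹ := by
      rw [tsum_mul_left, tsum_geometric_of_lt_one hρ0 hρ1]
    exact h1.trans (h2.trans h3.le)
  -- symmetric matrices
  have hRsym : Rᵀ = R := by
    rw [← Matrix.conjTranspose_eq_transpose_of_trivial, hR.1]
  have hQsym : Qᵀ = Q := by
    rw [← Matrix.conjTranspose_eq_transpose_of_trivial, hQ.1]
  -- the value matrix `P`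
  set Mstar : Matrix (Fin nx) (Fin nx) ℝ := Q + Kstarᵀ * R * Kstar with hMstar
  have hMsym : Mstarᵀ = Mstar := by
    rw [hMstar, Matrix.transpose_add, Matrix.transpose_mul, Matrix.transpose_mul,
      Matrix.transpose_transpose, hQsym, hRsym, Matrix.mul_assoc]
  set gseq : ℕ → Matrix (Fin nx) (Fin nx) ℝ :=
    fun t => (Lstar ^ t)ᵀ * Mstar * (Lstar ^ t) with hgseq
  have hgb : ∀ t, ‖gseq t‖ ≤ ((nx * ‖Mstar‖ * C₁) * C₁) * ρ ^ t := by
    intro t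
    have h1 := hgeo Kstar hKstar_ball t
    rw [← hLstar] at h1
    have h2 : ‖(Lstar ^ t)ᵀ‖ ≤ nx * ‖Lstar ^ t‖ := by
      have := CEGapAux.linfty_norm_transpose_le (Lstar ^ t)
      simpa [Fintype.card_fin] using this
    rw [hgseq]
    calc ‖(Lstar ^ t)ᵀ * Mstar * (Lstar ^ t)‖ ≤ ‖(Lstar ^ t)ᵀ * Mstar‖ * ‖Lstar ^ t‖ :=
          Matrix.linfty_opNorm_mul _ _
      _ ≤ ((nx * ‖Lstar ^ t‖) * ‖Mstar‖) * ‖Lstar ^ t‖ := by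
          apply mul_le_mul_of_nonneg_right _ (norm_nonneg _)
          exact (Matrix.linfty_opNorm_mul _ _).trans
            (mul_le_mul_of_nonneg_right h2 (norm_nonneg _))
      _ ≤ ((nx * (C₁ * r ^ t)) * ‖Mstar‖) * (C₁ * r ^ t) := by
          have hx1 : (nx * ‖Lstar ^ t‖) * ‖Mstar‖ ≤ (nx * (C₁ * r ^ t)) * ‖Mstar‖ :=
            mul_le_mul_of_nonneg_right
              (mul_le_mul_of_nonneg_left h1 (Nat.cast_nonneg _)) (norm_nonneg Mstar)
          exact mul_le_mul hx1 h1 (norm_nonneg _) (by positivity)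
      _ = ((nx * ‖Mstar‖ * C₁) * C₁) * ρ ^ t := by
          rw [hρdef, mul_pow]; ring
  have hgsum : Summable gseq :=
    Summable.of_norm_bounded
      ((summable_geometric_of_lt_one hρ0 hρ1).mul_left ((nx * ‖Mstar‖ * C₁) * C₁)) hgb
  set P : Matrix (Fin nx) (Fin nx) ℝ := ∑' t, gseq t with hPdef
  -- P is symmetric
  have hPsym : Pᵀ = P := by
    let trL : Matrix (Fin nx) (Fin nx) ℝ →ₗ[ℝ] Matrix (Fin nx) (Fin nx) ℝ :=
      { toFun := fun X => Xᵀ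
        map_add' := fun X Y => Matrix.transpose_add X Y
        map_smul' := fun c X => Matrix.transpose_smul c X }
    have h1 : (∑' t, gseq t)ᵀ = ∑' t, (gseq t)ᵀ :=
      (LinearMap.toContinuousLinearMap trL).map_tsum hgsum
    rw [hPdef, h1]
    apply tsum_congr
    intro t
    rw [hgseq]
    simp [Matrix.transpose_mul, Matrix.transpose_transpose, hMsym, Matrix.mul_assoc]
  -- Lyapunov equation for P
  have hshift : ∀ t, gseq (t+1) = Lstarᵀ * gseq t * Lstar := by
    intro t
    simp only [hgseq]
    rw [pow_succ, Matrix.transpose_mul]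
    simp [Matrix.mul_assoc]
  have hLyap : P = Mstar + Lstarᵀ * P * Lstar := by
    let conjL : Matrix (Fin nx) (Fin nx) ℝ →ₗ[ℝ] Matrix (Fin nx) (Fin nx) ℝ :=
      (LinearMap.mulRight ℝ Lstar).comp (LinearMap.mulLeft ℝ (Lstarᵀ))
    have h0 : ∑' t, gseq t = gseq 0 + ∑' t, gseq (t+1) := Summable.tsum_eq_zero_add hgsum
    have hg0 : gseq 0 = Mstar := by simp only [hgseq]; simp
    have h1 : (∑' t, gseq (t+1)) = Lstarᵀ * P * Lstar := by
      have hmt : (LinearMap.toContinuousLinearMap conjL) (∑' t, gseq t)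
          = ∑' t, (LinearMap.toContinuousLinearMap conjL) (gseq t) :=
        (LinearMap.toContinuousLinearMap conjL).map_tsum hgsum
      calc (∑' t, gseq (t+1)) = ∑' t, Lstarᵀ * gseq t * Lstar := tsum_congr hshift
        _ = Lstarᵀ * (∑' t, gseq t) * Lstar := hmt.symm
        _ = Lstarᵀ * P * Lstar := by rw [← hPdef]
    calc P = gseq 0 + ∑' t, gseq (t+1) := by rw [hPdef, ← h0]
      _ = Mstar + Lstarᵀ * P * Lstar := by rw [hg0, h1]
  -- cost as a series in `Wt`
  have hcost_eq : ∀ K : Matrix (Fin nu) (Fin nx) ℝ,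
      lqrCost A B Q R Sw K = ∑' t, ((Q + Kᵀ * R * K) * Wt K t).trace := by
    intro K
    unfold lqrCost
    apply tsum_congr
    intro t
    simp only [hWdef, Matrix.transpose_pow]
  -- the optimal cost equals `tr (P Sw)`
  have hrot : ∀ t, ((Q + Kstarᵀ * R * Kstar) * Wt Kstar t).trace = (gseq t * Sw).trace := by
    intro t
    have e1 : (Q + Kstarᵀ * R * Kstar) * Wt Kstar t
        = Mstar * ((Lstar ^ t) * Sw) * ((Lstar ^ t)ᵀ) := by
      simp only [hWdef, hMstar, ← hLstar]
      simp [Matrix.mul_assoc]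
    rw [e1, Matrix.trace_mul_cycle, hgseq]
    congr 1
    simp [Matrix.mul_assoc]
  have hJstar : lqrCost A B Q R Sw Kstar = (P * Sw).trace := by
    let trS : Matrix (Fin nx) (Fin nx) ℝ →ₗ[ℝ] ℝ :=
      (Matrix.traceLinearMap (Fin nx) ℝ ℝ).comp (LinearMap.mulRight ℝ Sw)
    have hmt : (LinearMap.toContinuousLinearMap trS) (∑' t, gseq t)
        = ∑' t, (LinearMap.toContinuousLinearMap trS) (gseq t) :=
      (LinearMap.toContinuousLinearMap trS).map_tsum hgsum
    calc lqrCost A B Q R Sw Kstar = ∑' t, ((Q + Kstarᵀ * R * Kstar) * Wt Kstar t).trace :=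
          hcost_eq Kstar
      _ = ∑' t, (gseq t * Sw).trace := tsum_congr hrot
      _ = ((∑' t, gseq t) * Sw).trace := hmt.symm
      _ = (P * Sw).trace := by rw [← hPdef]
  -- value-difference identity
  set GK : Matrix (Fin nu) (Fin nx) ℝ → Matrix (Fin nx) (Fin nx) ℝ :=
    fun K => Q + Kᵀ * R * K + (A + B * K)ᵀ * P * (A + B * K) - P with hGK
  have hvd : ∀ K : Matrix (Fin nu) (Fin nx) ℝ, specNormR (K - Kstar) ≤ ε₀ →
      lqrCost A B Q R Sw K - (P * Sw).trace = ∑' t, ((GK K) * Wt K t).trace := by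
    intro K hK
    have hu : Summable (fun t => ((Q + Kᵀ * R * K) * Wt K t).trace) := hsummable _ K hK
    have hv : Summable (fun t => (P * Wt K t).trace) := hsummable _ K hK
    have hv' : Summable (fun t => (P * Wt K (t+1)).trace) := by
      have := (_root_.summable_nat_add_iff 1).mpr hv
      simpa using this
    have hW_succ : ∀ t, Wt K (t+1) = (A + B * K) * Wt K t * (A + B * K)ᵀ := by
      intro t
      simp only [hWdef]
      rw [pow_succ' (A + B * K) t, Matrix.transpose_mul]
      simp [Matrix.mul_assoc]
    have hsplit : ∀ t, ((GK K) * Wt K t).trace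
        = ((Q + Kᵀ * R * K) * Wt K t).trace
          + ((P * Wt K (t+1)).trace - (P * Wt K t).trace) := by
      intro t
      simp only [hGK]
      simp only [Matrix.sub_mul, Matrix.add_mul, Matrix.trace_sub, Matrix.trace_add]
      have hmid : ((A + B * K)ᵀ * P * (A + B * K) * Wt K t).trace
          = (P * Wt K (t+1)).trace := by
        rw [hW_succ t]
        rw [show (A + B * K)ᵀ * P * (A + B * K) * Wt K t
            = (A + B * K)ᵀ * (P * ((A + B * K) * Wt K t)) from by simp [Matrix.mul_assoc],
          Matrix.trace_mul_comm]
        congr 1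
        simp [Matrix.mul_assoc]
      rw [hmid]
      ring
    have hv'sub : Summable (fun t => (P * Wt K (t+1)).trace - (P * Wt K t).trace) := hv'.sub hv
    have hW0 : Wt K 0 = Sw := by
      simp only [hWdef]; simp
    have hvzero : (P * Wt K 0).trace = (P * Sw).trace := by rw [hW0]
    have hshifted : ∑' t, (P * Wt K (t+1)).trace = (∑' t, (P * Wt K t).trace) - (P * Sw).trace := by
      have := Summable.tsum_eq_zero_add hv
      rw [hvzero] at this
      linarith [this]
    calc lqrCost A B Q R Sw K - (P * Sw).trace
        = (∑' t, ((Q + Kᵀ * R * K) * Wt K t).trace) - (P * Sw).trace := by rw [hcost_eq K]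
      _ = (∑' t, ((Q + Kᵀ * R * K) * Wt K t).trace)
          + ((∑' t, (P * Wt K (t+1)).trace) - ∑' t, (P * Wt K t).trace) := by
          rw [hshifted]; ring
      _ = (∑' t, ((Q + Kᵀ * R * K) * Wt K t).trace)
          + (∑' t, ((P * Wt K (t+1)).trace - (P * Wt K t).trace)) := by
          rw [Summable.tsum_sub hv' hv]
      _ = ∑' t, (((Q + Kᵀ * R * K) * Wt K t).trace
          + ((P * Wt K (t+1)).trace - (P * Wt K t).trace)) := (Summable.tsum_add hu hv'sub).symm
      _ = ∑' t, ((GK K) * Wt K t).trace := (tsum_congr hsplit).symm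
  -- the stationarity matrix `E` and curvature matrix `C2`
  set E : Matrix (Fin nu) (Fin nx) ℝ := R * Kstar + Bᵀ * P * Lstar with hE
  set C2 : Matrix (Fin nu) (Fin nu) ℝ := R + Bᵀ * P * B with hC2
  have hGsimp : ∀ K : Matrix (Fin nu) (Fin nx) ℝ,
      GK K = (K - Kstar)ᵀ * E + Eᵀ * (K - Kstar)
        + (K - Kstar)ᵀ * C2 * (K - Kstar) := by
    intro K
    have hid := CEGapAux.G_decomp A Q P B R Kstar (K - Kstar) hRsym hPsym
    have hKK : Kstar + (K - Kstar) = K := by abel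
    rw [hKK] at hid
    have hz : Q + Kstarᵀ * R * Kstar + (A + B * Kstar)ᵀ * P * (A + B * Kstar) - P
        = (0 : Matrix (Fin nx) (Fin nx) ℝ) := by
      simp only [← hLstar, ← hMstar]
      rw [← hLyap]
      exact sub_self P
    rw [hz, add_zero] at hid
    simp only [← hLstar, ← hE, ← hC2] at hid
    simpa only [hGK] using hid
  -- stationarity: `E = 0` at the minimizer
  have hE0 : E = 0 := by
    by_contra hEne
    have hsE : 0 < specNormR E := CEGapAux.specNormR_pos hEne
    have hc₀pos : 0 < (E * Sw * Eᵀ).trace := CEGapAux.trace_quad_pos Sw hSw hEne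
    set c₀ : ℝ := (E * Sw * Eᵀ).trace with hc₀
    set cb : ℝ := (nx * ‖Eᵀ * C2 * E‖ * (nx * ‖Sw‖ * (C₁ * C₁))) * (1 - ρ)⁻¹ with hcb
    have hcb0 : 0 ≤ cb := by
      rw [hcb]
      have : (0:ℝ) ≤ (1 - ρ)⁻¹ := hρinv.le
      positivity
    set η : ℝ := min (ε₀ / (specNormR E + 1)) (c₀ / (cb + 1)) with hη
    have hη0 : 0 < η := lt_min (by positivity) (by positivity)
    set Kη : Matrix (Fin nu) (Fin nx) ℝ := Kstar - η • E with hKη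
    have hΔ : Kη - Kstar = -(η • E) := by rw [hKη]; abel
    have hball_η : specNormR (Kη - Kstar) ≤ ε₀ := by
      rw [hΔ, CEGapAux.specNormR_neg, CEGapAux.specNormR_smul, abs_of_pos hη0]
      have h1 : η ≤ ε₀ / (specNormR E + 1) := min_le_left _ _
      calc η * specNormR E ≤ (ε₀ / (specNormR E + 1)) * specNormR E :=
            mul_le_mul_of_nonneg_right h1 (CEGapAux.specNormR_nonneg E)
        _ ≤ ε₀ := by
            rw [div_mul_eq_mul_div, div_le_iff₀ (by positivity)]
            nlinarith [CEGapAux.specNormR_nonneg E, hε₀]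
    have hGη : GK Kη = (η * η) • (Eᵀ * C2 * E) - (2 * η) • (Eᵀ * E) := by
      rw [hGsimp Kη, hΔ]
      simp only [Matrix.transpose_neg, Matrix.transpose_smul, Matrix.neg_mul, Matrix.mul_neg,
        Matrix.smul_mul, Matrix.mul_smul, neg_neg, smul_smul]
      module
    have ha_eq : ∀ t, ((Eᵀ * E) * Wt Kη t).trace
        = ((E * (A + B * Kη) ^ t) * Sw * (E * (A + B * Kη) ^ t)ᵀ).trace := by
      intro t
      rw [show (Eᵀ * E) * Wt Kη t = Eᵀ * (E * Wt Kη t) from by simp [Matrix.mul_assoc],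
        Matrix.trace_mul_comm]
      congr 1
      simp only [hWdef]
      simp [Matrix.mul_assoc, Matrix.transpose_mul]
    have ha_nonneg : ∀ t, 0 ≤ ((Eᵀ * E) * Wt Kη t).trace := by
      intro t
      rw [ha_eq t]
      exact CEGapAux.trace_quad_nonneg Sw hSw.posSemidef _
    have ha0 : ((Eᵀ * E) * Wt Kη 0).trace = c₀ := by
      rw [ha_eq 0]
      simp [hc₀]
    have hsa : Summable (fun t => ((Eᵀ * E) * Wt Kη t).trace) := hsummable _ _ hball_η
    have hsb : Summable (fun t => ((Eᵀ * C2 * E) * Wt Kη t).trace) := hsummable _ _ hball_η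
    have hSa_ge : c₀ ≤ ∑' t, ((Eᵀ * E) * Wt Kη t).trace := by
      rw [← ha0]
      exact Summable.le_tsum hsa 0 (fun j _ => ha_nonneg j)
    have hSb_le : ∑' t, ((Eᵀ * C2 * E) * Wt Kη t).trace ≤ cb := by
      have := htsum_le (Eᵀ * C2 * E) Kη hball_η
      rw [hcb]
      exact (le_abs_self _).trans this
    have hterm : ∀ t, ((GK Kη) * Wt Kη t).trace
        = (η * η) * ((Eᵀ * C2 * E) * Wt Kη t).trace
          - (2 * η) * ((Eᵀ * E) * Wt Kη t).trace := by
      intro t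
      rw [hGη, Matrix.sub_mul, Matrix.trace_sub, Matrix.smul_mul, Matrix.smul_mul,
        Matrix.trace_smul, Matrix.trace_smul]
      simp [smul_eq_mul]
    have hsum_eq : ∑' t, ((GK Kη) * Wt Kη t).trace
        = (η * η) * (∑' t, ((Eᵀ * C2 * E) * Wt Kη t).trace)
          - (2 * η) * (∑' t, ((Eᵀ * E) * Wt Kη t).trace) := by
      rw [tsum_congr hterm, Summable.tsum_sub (hsb.mul_left _) (hsa.mul_left _),
        tsum_mul_left, tsum_mul_left]
    have hneg : lqrCost A B Q R Sw Kη - lqrCost A B Q R Sw Kstar < 0 := by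
      rw [hJstar, hvd Kη hball_η, hsum_eq]
      have h1 : (η * η) * (∑' t, ((Eᵀ * C2 * E) * Wt Kη t).trace) ≤ (η * η) * cb :=
        mul_le_mul_of_nonneg_left hSb_le (by positivity)
      have h2 : (2 * η) * c₀ ≤ (2 * η) * (∑' t, ((Eᵀ * E) * Wt Kη t).trace) :=
        mul_le_mul_of_nonneg_left hSa_ge (by positivity)
      have hηcb : η * cb ≤ c₀ := by
        have h3 : η ≤ c₀ / (cb + 1) := min_le_right _ _
        calc η * cb ≤ (c₀ / (cb + 1)) * cb := mul_le_mul_of_nonneg_right h3 hcb0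
          _ ≤ c₀ := by
              rw [div_mul_eq_mul_div, div_le_iff₀ (by positivity)]
              nlinarith
      nlinarith
    have := hopt Kη (hschur Kη hball_η)
    linarith
  -- the final constant
  set Cfin : ℝ := (nx * (nx * (specNormR C2 + 1)) * (nx * ‖Sw‖ * (C₁ * C₁))) * (1 - ρ)⁻¹ + 1
    with hCfin
  have hCfin0 : 0 < Cfin := by
    rw [hCfin]
    have h1 : (0:ℝ) ≤ specNormR C2 := CEGapAux.specNormR_nonneg C2
    have h2 : (0:ℝ) ≤ (1 - ρ)⁻¹ := hρinv.le
    positivity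
  refine ⟨ε₀, hε₀, Cfin, hCfin0, fun K hK => ⟨hschur K hK, ?_⟩⟩
  have hgap : lqrCost A B Q R Sw K - lqrCost A B Q R Sw Kstar
      = ∑' t, ((((K - Kstar)ᵀ * C2 * (K - Kstar))) * Wt K t).trace := by
    rw [hJstar, hvd K hK]
    apply tsum_congr
    intro t
    congr 2
    rw [hGsimp K, hE0]
    simp
  have hXspec : specNormR ((K - Kstar)ᵀ * C2 * (K - Kstar))
      ≤ (specNormR C2 + 1) * specNormR (K - Kstar) ^ 2 := by
    have h1 : specNormR ((K - Kstar)ᵀ * C2 * (K - Kstar))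
        ≤ specNormR ((K - Kstar)ᵀ * C2) * specNormR (K - Kstar) :=
      CEGapAux.specNormR_mul_le _ _
    have h2 : specNormR ((K - Kstar)ᵀ * C2) ≤ specNormR (K - Kstar) * specNormR C2 := by
      have := CEGapAux.specNormR_mul_le ((K - Kstar)ᵀ) C2
      rwa [CEGapAux.specNormR_transpose] at this
    have h3 := CEGapAux.specNormR_nonneg (K - Kstar)
    have h4 := CEGapAux.specNormR_nonneg C2
    nlinarith
  have hXnorm : ‖(K - Kstar)ᵀ * C2 * (K - Kstar)‖
      ≤ nx * ((specNormR C2 + 1) * specNormR (K - Kstar) ^ 2) := by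
    have h1 := CEGapAux.linfty_norm_le_card_mul_spec ((K - Kstar)ᵀ * C2 * (K - Kstar))
    rw [Fintype.card_fin] at h1
    exact h1.trans (mul_le_mul_of_nonneg_left hXspec (Nat.cast_nonneg _))
  have hfinal := htsum_le ((K - Kstar)ᵀ * C2 * (K - Kstar)) K hK
  rw [hgap]
  have hle1 : ∑' t, ((((K - Kstar)ᵀ * C2 * (K - Kstar))) * Wt K t).trace
      ≤ (nx * ‖(K - Kstar)ᵀ * C2 * (K - Kstar)‖ * (nx * ‖Sw‖ * (C₁ * C₁))) * (1 - ρ)⁻¹ :=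
    (le_abs_self _).trans hfinal
  have hS0 : (0:ℝ) ≤ nx * ‖Sw‖ * (C₁ * C₁) := by positivity
  have hsq : (0:ℝ) ≤ specNormR (K - Kstar) ^ 2 := sq_nonneg _
  have hC20 : (0:ℝ) ≤ specNormR C2 := CEGapAux.specNormR_nonneg C2
  calc ∑' t, ((((K - Kstar)ᵀ * C2 * (K - Kstar))) * Wt K t).trace
      ≤ (nx * ‖(K - Kstar)ᵀ * C2 * (K - Kstar)‖ * (nx * ‖Sw‖ * (C₁ * C₁))) * (1 - ρ)⁻¹ := hle1
    _ ≤ ((nx * (nx * ((specNormR C2 + 1) * specNormR (K - Kstar) ^ 2))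
          * (nx * ‖Sw‖ * (C₁ * C₁))) * (1 - ρ)⁻¹) := by
        apply mul_le_mul_of_nonneg_right _ hρinv.le
        apply mul_le_mul_of_nonneg_right _ hS0
        exact mul_le_mul_of_nonneg_left hXnorm (Nat.cast_nonneg _)
    _ = ((nx * (nx * (specNormR C2 + 1)) * (nx * ‖Sw‖ * (C₁ * C₁))) * (1 - ρ)⁻¹)
          * specNormR (K - Kstar) ^ 2 := by ring
    _ ≤ Cfin * specNormR (K - Kstar) ^ 2 := by
        apply mul_le_mul_of_nonneg_right _ hsq
        rw [hCfin]
        linarith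
end
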